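/- arXiv:1203.4972 — 3 statements merged into one kernel-verified Lean document; each statement's English description precedes it below -/
import Mathlib

section
/- Suppose linear binary forms L_1,...,L_m (in two variables over the complex numbers) are pairwise non-proportional, and suppose 0 = G_1·L_1^{n-g_1+1} + ... + G_m·L_m^{n-g_m+1}, where each G_i is a binary form of degree g_i - 1 and the sum of the g_i is at most n+1. Then G_i = 0 for every i. -/
open MvPolynomial

noncomputable def contractOp (φ f : MvPolynomial (Fin 2) ℂ) : MvPolynomial (Fin 2) ℂ :=
  φ.support.sum fun m =>
    φ.coeff m • ((fun p => pderiv (0 : Fin 2) p)^[m 0]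
      ((fun p => pderiv (1 : Fin 2) p)^[m 1] f))

def IsLinearForm (L : MvPolynomial (Fin 2) ℂ) : Prop := L ≠ 0 ∧ L.IsHomogeneous 1

def Proportional (L L' : MvPolynomial (Fin 2) ℂ) : Prop := ∃ c : ℂ, L' = c • L

def IsGAD (n : ℕ) (f : MvPolynomial (Fin 2) ℂ) (m : ℕ)
    (L : Fin m → MvPolynomial (Fin 2) ℂ) (g : Fin m → ℕ)
    (G : Fin m → MvPolynomial (Fin 2) ℂ) : Prop :=
  (∀ i, IsLinearForm (L i)) ∧
  (∀ i j, i ≠ j → ¬ Proportional (L i) (L j)) ∧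
  (∀ i, 1 ≤ g i) ∧
  (∀ i, (G i).IsHomogeneous (g i - 1)) ∧
  f = ∑ i, G i * (L i) ^ (n - g i + 1)

def HasGADLength (n : ℕ) (f : MvPolynomial (Fin 2) ℂ) (s : ℕ) : Prop :=
  ∃ m L g G, IsGAD n f m L g G ∧ ∑ i, g i = s

namespace JordanAux

abbrev P2 : Type := MvPolynomial (Fin 2) ℂ




lemma deg2 (d : Fin 2 →₀ ℕ) : d.degree = d 0 + d 1 := by
  have h : ∑ i : Fin 2, d i = d 0 + d 1 := Fin.sum_univ_two d
  rw [Finsupp.degree, ← h]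
  exact Finset.sum_subset (Finset.subset_univ _)
    (fun x _ hx => Finsupp.notMem_support_iff.mp hx)

lemma fext2 {d e : Fin 2 →₀ ℕ} (h0 : d 0 = e 0) (h1 : d 1 = e 1) : d = e := by
  ext i
  fin_cases i
  · exact h0
  · exact h1

lemma homog_pderiv {φ : P2} {n : ℕ} (i : Fin 2) (h : φ.IsHomogeneous n) :
    (pderiv i φ).IsHomogeneous (n - 1) := by
  have hrw : pderiv i φ
      = ∑ d ∈ φ.support, monomial (d - Finsupp.single i 1) (coeff d φ * d i) := by
    conv_lhs => rw [φ.as_sum]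
    rw [map_sum]
    simp [pderiv_monomial]
  rw [hrw]
  apply IsHomogeneous.sum
  intro d hd
  by_cases hdi : d i = 0
  · rw [hdi]
    simp only [Nat.cast_zero, mul_zero, map_zero]
    exact isHomogeneous_zero _ _ _
  · apply isHomogeneous_monomial
    have hdeg : d.degree = n := by
      have := h (mem_support_iff.mp hd)
      rwa [Finsupp.degree_eq_weight_one]
    have h1 : 1 ≤ d i := Nat.one_le_iff_ne_zero.mpr hdi
    have hsub : ∀ j : Fin 2, (d - Finsupp.single i 1 : Fin 2 →₀ ℕ) j
        = d j - (Finsupp.single i 1 : Fin 2 →₀ ℕ) j :=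
      fun j => Finsupp.tsub_apply d (Finsupp.single i 1) j
    rw [deg2] at hdeg ⊢
    rw [hsub 0, hsub 1]
    have h2 : i = 0 ∨ i = 1 := by fin_cases i; exacts [Or.inl rfl, Or.inr rfl]
    rcases h2 with rfl | rfl <;> simp only [Finsupp.single_apply] <;> norm_num <;> omega

lemma eq_C_of_homog0 {G : P2} (h : G.IsHomogeneous 0) : G = C (coeff 0 G) := by
  ext d
  rw [coeff_C]
  by_cases hd : d = 0
  · subst hd; simp
  · rw [if_neg (by exact fun he => hd he.symm)]
    apply h.coeff_eq_zero
    rw [Ne, Finsupp.degree_eq_zero_iff]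
    exact hd

lemma linear_rep {L : P2} (h : L.IsHomogeneous 1) :
    L = C (coeff (Finsupp.single 0 1) L) * X 0 + C (coeff (Finsupp.single 1 1) L) * X 1 := by
  classical
  ext d
  rw [coeff_add, coeff_C_mul, coeff_C_mul, coeff_X', coeff_X']
  by_cases h0 : d = Finsupp.single 0 1
  · subst h0
    rw [if_pos rfl, if_neg]
    · ring
    · intro he
      have := DFunLike.congr_fun he (0 : Fin 2)
      simp [Finsupp.single_apply] at this
  · by_cases h1 : d = Finsupp.single 1 1
    · subst h1
      rw [if_pos rfl, if_neg]
      · ring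
      · intro he
        have := DFunLike.congr_fun he (0 : Fin 2)
        simp [Finsupp.single_apply] at this
    · rw [if_neg (fun he => h0 he.symm), if_neg (fun he => h1 he.symm)]
      have hdeg : d.degree ≠ 1 := by
        rw [deg2]
        intro hc
        rcases Nat.eq_zero_or_pos (d 0) with hz | hp
        · apply h1
          apply fext2 <;> simp [Finsupp.single_apply] <;> omega
        · apply h0
          apply fext2 <;> simp [Finsupp.single_apply] <;> omega
      rw [h.coeff_eq_zero hdeg]
      ring



noncomputable def Dop (α β : ℂ) : P2 →ₗ[ℂ] P2 where
  toFun f := C α * pderiv 0 f + C β * pderiv 1 f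
  map_add' f g := by simp only [map_add]; ring
  map_smul' c f := by
    simp only [Derivation.map_smul, RingHom.id_apply, smul_eq_C_mul, pderiv_C_mul]
    ring

variable {α β : ℂ}

lemma Dop_apply (f : P2) : Dop α β f = C α * pderiv 0 f + C β * pderiv 1 f := rfl

lemma Dop_C (x : ℂ) : Dop α β (C x) = 0 := by
  simp [Dop_apply, pderiv_C]

lemma Dop_mul (f g : P2) :
    Dop α β (f * g) = Dop α β f * g + f * Dop α β g := by
  simp only [Dop_apply, pderiv_mul]
  ring

lemma Dop_homog {φ : P2} {n : ℕ} (h : φ.IsHomogeneous n) :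
    (Dop α β φ).IsHomogeneous (n - 1) := by
  rw [Dop_apply]
  apply IsHomogeneous.add
  · simpa using (isHomogeneous_C (Fin 2) α).mul (homog_pderiv 0 h)
  · simpa using (isHomogeneous_C (Fin 2) β).mul (homog_pderiv 1 h)

lemma Dop_pow (L : P2) (k : ℕ) :
    Dop α β (L ^ (k + 1)) = C ((k : ℂ) + 1) * L ^ k * Dop α β L := by
  induction k with
  | zero => norm_num
  | succ k ih =>
    rw [pow_succ, Dop_mul, ih]
    push_cast
    simp only [C_add, C_1]
    ring

lemma Dop_mul_pow {L G : P2} {c : ℂ} (hDL : Dop α β L = C c) (e : ℕ) :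
    Dop α β (G * L ^ (e + 1))
      = (Dop α β G * L + C (((e : ℂ) + 1) * c) * G) * L ^ e := by
  rw [Dop_mul, Dop_pow, hDL, map_mul, pow_succ]
  ring

lemma iter_zero (k : ℕ) : (Dop α β)^[k] (0 : P2) = 0 :=
  Function.iterate_fixed (map_zero _) k

lemma iter_kill : ∀ (k : ℕ) {d : ℕ} {G : P2}, G.IsHomogeneous d → d < k →
    (Dop α β)^[k] G = 0 := by
  intro k
  induction k with
  | zero => intro d G _ h; omega
  | succ k ih =>
    intro d G hG hd
    rw [Function.iterate_succ_apply]
    rcases Nat.eq_zero_or_pos d with rfl | hdp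
    · rw [eq_C_of_homog0 hG, Dop_C, iter_zero]
    · exact ih (d := d - 1) (Dop_homog hG) (by omega)

lemma Dop_pow_of_zero {L : P2} (hDL : Dop α β L = 0) (e : ℕ) :
    Dop α β (L ^ e) = 0 := by
  cases e with
  | zero => simpa using Dop_C 1
  | succ e => rw [Dop_pow, hDL, mul_zero]

lemma iter_keep {L : P2} (hDL : Dop α β L = 0) (e : ℕ) :
    ∀ (k : ℕ) (G : P2), (Dop α β)^[k] (G * L ^ e) = ((Dop α β)^[k] G) * L ^ e := by
  intro k
  induction k with
  | zero => intro G; rfl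
  | succ k ih =>
    intro G
    rw [Function.iterate_succ_apply, Function.iterate_succ_apply,
      Dop_mul, Dop_pow_of_zero hDL, mul_zero, add_zero, ih]


lemma step_homog {L G : P2} {d : ℕ} {z : ℂ} (hL1 : L.IsHomogeneous 1)
    (hG : G.IsHomogeneous d) :
    (Dop α β G * L + C z * G).IsHomogeneous d := by
  cases d with
  | zero =>
    have hx := eq_C_of_homog0 hG
    rw [hx, Dop_C, zero_mul, zero_add, ← C_mul]
    exact isHomogeneous_C _ _
  | succ d' =>
    apply IsHomogeneous.add
    · simpa using (Dop_homog hG).mul hL1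
    · simpa using (isHomogeneous_C (Fin 2) z).mul hG

lemma killB {L : P2} {c : ℂ} (hDL : Dop α β L = C c) (hc : c ≠ 0) :
    ∀ (d : ℕ) (G : P2), G.IsHomogeneous d → ∀ e : ℕ, 1 ≤ e →
      C ((e : ℂ) * c) * G + L * Dop α β G = 0 → G = 0 := by
  have hLne : L ≠ 0 := by
    intro h
    rw [h, map_zero] at hDL
    exact hc (by simpa using hDL.symm)
  intro d
  induction d with
  | zero =>
    intro G hG e he heq
    have hx := eq_C_of_homog0 hG
    rw [hx, Dop_C, mul_zero, add_zero, ← C_mul] at heq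
    have h1 : (e : ℂ) * c * coeff 0 G = 0 := by
      simpa using heq
    have h2 : coeff 0 G = 0 := by
      have hce : ((e : ℂ)) ≠ 0 := Nat.cast_ne_zero.mpr (by omega)
      exact (mul_eq_zero.mp h1).resolve_left (mul_ne_zero hce hc)
    rw [hx, h2, map_zero]
  | succ d ih =>
    intro G hG e he heq
    set z : ℂ := (e : ℂ) * c with hz
    have hzne : z ≠ 0 := mul_ne_zero (Nat.cast_ne_zero.mpr (by omega)) hc
    set G₁ : P2 := C (-z⁻¹) * Dop α β G with hG₁
    have hG₁h : G₁.IsHomogeneous d := by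
      rw [hG₁]
      simpa only [zero_add, Nat.add_sub_cancel] using
        (isHomogeneous_C (Fin 2) (-z⁻¹)).mul (Dop_homog hG)
    have hGeq : G = L * G₁ := by
      have h1 : C z * G = -(L * Dop α β G) := eq_neg_of_add_eq_zero_left heq
      have h2 : L * G₁ = C z⁻¹ * (C z * G) := by
        rw [hG₁, h1, map_neg]
        ring
      rw [h2, ← mul_assoc, ← C_mul, inv_mul_cancel₀ hzne, C_1, one_mul]
    have heq1 : C (((e + 1 : ℕ) : ℂ) * c) * G₁ + L * Dop α β G₁ = 0 := by
      rw [hGeq, Dop_mul, hDL] at heq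
      have h3 : L * (C (((e + 1 : ℕ) : ℂ) * c) * G₁ + L * Dop α β G₁) = 0 := by
        have hcast : (((e + 1 : ℕ) : ℂ) * c) = z + c := by push_cast [hz]; ring
        rw [hcast, C_add]
        linear_combination heq
      rcases mul_eq_zero.mp h3 with h | h
      · exact absurd h hLne
      · exact h
    have hG₁0 : G₁ = 0 := ih G₁ hG₁h (e + 1) (by omega) heq1
    rw [hGeq, hG₁0, mul_zero]

lemma killA {L : P2} {c : ℂ} (hL1 : L.IsHomogeneous 1) (hDL : Dop α β L = C c) (hc : c ≠ 0) :
    ∀ (k : ℕ) {d e : ℕ} {G : P2}, G.IsHomogeneous d → k ≤ e →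
      (Dop α β)^[k] (G * L ^ e) = 0 → G = 0 := by
  have hLne : L ≠ 0 := by
    intro h
    rw [h, map_zero] at hDL
    exact hc (by simpa using hDL.symm)
  intro k
  induction k with
  | zero =>
    intro d e G _ _ h0
    rcases mul_eq_zero.mp h0 with h | h
    · exact h
    · exact absurd h (pow_ne_zero _ hLne)
  | succ k ih =>
    intro d e G hG hke h0
    obtain ⟨e', rfl⟩ : ∃ e', e = e' + 1 := ⟨e - 1, by omega⟩
    rw [Function.iterate_succ_apply, Dop_mul_pow hDL] at h0
    have hG' : (Dop α β G * L + C (((e' : ℂ) + 1) * c) * G).IsHomogeneous d :=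
      step_homog hL1 hG
    have h1 : Dop α β G * L + C (((e' : ℂ) + 1) * c) * G = 0 :=
      ih hG' (by omega) h0
    apply killB hDL hc d G hG (e' + 1) (by omega)
    have hcast : (((e' + 1 : ℕ) : ℂ) * c) = ((e' : ℂ) + 1) * c := by push_cast; ring
    rw [hcast]
    linear_combination h1

lemma existsH {L : P2} {c : ℂ} (hL1 : L.IsHomogeneous 1) (hDL : Dop α β L = C c) :
    ∀ (k : ℕ) {d e : ℕ} {G : P2}, G.IsHomogeneous d → k ≤ e →
      ∃ H : P2, H.IsHomogeneous d ∧ (Dop α β)^[k] (G * L ^ e) = H * L ^ (e - k) := by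
  intro k
  induction k with
  | zero => intro d e G hG _; exact ⟨G, hG, by rw [Nat.sub_zero, Function.iterate_zero_apply]⟩
  | succ k ih =>
    intro d e G hG hke
    obtain ⟨e', rfl⟩ : ∃ e', e = e' + 1 := ⟨e - 1, by omega⟩
    rw [Function.iterate_succ_apply, Dop_mul_pow hDL]
    obtain ⟨H, hH1, hH2⟩ := ih (step_homog hL1 hG) (show k ≤ e' by omega)
    exact ⟨H, hH1, by rw [hH2, show e' - k = e' + 1 - (k + 1) from by omega]⟩


lemma Dop_linear (a' b' : ℂ) :
    Dop α β (C a' * X 0 + C b' * X 1) = C (α * a' + β * b') := by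
  rw [Dop_apply]
  rw [map_add, map_add, pderiv_C_mul, pderiv_C_mul, pderiv_C_mul, pderiv_C_mul,
    pderiv_X_self, pderiv_X_self,
    pderiv_X_of_ne (show (1 : Fin 2) ≠ 0 by decide),
    pderiv_X_of_ne (show (0 : Fin 2) ≠ 1 by decide)]
  rw [C_add, C_mul, C_mul]
  ring

lemma det_ne_zero {L L' : P2} (hL : L ≠ 0) (hL1 : L.IsHomogeneous 1)
    (hL' : L' ≠ 0) (hL1' : L'.IsHomogeneous 1) (hnp : ¬ Proportional L L') :
    coeff (Finsupp.single 1 1) L * coeff (Finsupp.single 0 1) L'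
      - coeff (Finsupp.single 0 1) L * coeff (Finsupp.single 1 1) L' ≠ 0 := by
  have hLr := linear_rep hL1
  have hLr' := linear_rep hL1'
  set a := coeff (Finsupp.single 0 1) L with ha0
  set b := coeff (Finsupp.single 1 1) L with hb0
  set a' := coeff (Finsupp.single 0 1) L' with ha0'
  set b' := coeff (Finsupp.single 1 1) L' with hb0'
  intro hdet
  apply hnp
  have hab : ¬ (a = 0 ∧ b = 0) := by
    rintro ⟨h1, h2⟩
    apply hL
    rw [hLr, h1, h2]
    simp
  by_cases ha : a = 0
  · have hb : b ≠ 0 := fun h => hab ⟨ha, h⟩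
    have ha' : a' = 0 := by
      have h1 : b * a' = 0 := by rw [ha] at hdet; linear_combination hdet
      exact (mul_eq_zero.mp h1).resolve_left hb
    refine ⟨b' / b, ?_⟩
    rw [hLr', hLr, smul_eq_C_mul, ha, ha']
    rw [mul_add, ← mul_assoc, ← mul_assoc, ← C_mul, ← C_mul, div_mul_cancel₀ _ hb]
    simp
  · refine ⟨a' / a, ?_⟩
    have hb' : b' = b * a' / a := by
      field_simp
      linear_combination -hdet
    rw [hLr', hLr, smul_eq_C_mul]
    rw [mul_add, ← mul_assoc, ← mul_assoc, ← C_mul, ← C_mul, div_mul_cancel₀ _ ha, hb']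
    rw [show a' / a * b = b * a' / a by ring]

lemma jordan_aux : ∀ (m : ℕ) (L G : Fin m → P2) (d e : Fin m → ℕ),
    (∀ i, IsLinearForm (L i)) →
    (∀ i j, i ≠ j → ¬ Proportional (L i) (L j)) →
    (∀ i, (G i).IsHomogeneous (d i)) →
    (∀ i, ∑ j, (d j + 1) ≤ e i + (d i + 1)) →
    ((0 : P2) = ∑ i, G i * (L i) ^ (e i)) →
    ∀ i, G i = 0 := by
  intro m
  induction m with
  | zero => exact fun L G d e _ _ _ _ _ i => i.elim0
  | succ m ih =>
    intro L G d e hL hprop hG hcond h0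
    set a := coeff (Finsupp.single 0 1) (L 0) with ha
    set b := coeff (Finsupp.single 1 1) (L 0) with hb
    have hrep0 : L 0 = C a * X 0 + C b * X 1 := linear_rep (hL 0).2
    have hD0 : Dop b (-a) (L 0) = 0 := by
      rw [hrep0, Dop_linear, show b * a + -a * b = 0 by ring, map_zero]
    have hsle : ∀ i : Fin m, d i.succ + 1 ≤ ∑ j : Fin m, (d j.succ + 1) :=
      fun i => Finset.single_le_sum (f := fun j : Fin m => d j.succ + 1)
        (fun j _ => Nat.zero_le _) (Finset.mem_univ i)
    have hcond' : ∀ i : Fin m,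
        d 0 + 1 + ∑ j : Fin m, (d j.succ + 1) ≤ e i.succ + (d i.succ + 1) := by
      intro i
      have hx := hcond i.succ
      rwa [Fin.sum_univ_succ] at hx
    have hkle : ∀ i : Fin m, d 0 + 1 ≤ e i.succ := by
      intro i
      have := hcond' i
      have := hsle i
      omega
    have hDsucc : ∀ i : Fin m,
        Dop b (-a) (L i.succ)
          = C (b * coeff (Finsupp.single 0 1) (L i.succ)
              - a * coeff (Finsupp.single 1 1) (L i.succ)) := by
      intro i
      conv_lhs => rw [linear_rep (hL i.succ).2]
      rw [Dop_linear]
      ring_nf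
    have hcne : ∀ i : Fin m,
        b * coeff (Finsupp.single 0 1) (L i.succ)
          - a * coeff (Finsupp.single 1 1) (L i.succ) ≠ 0 := by
      intro i
      exact det_ne_zero (hL 0).1 (hL 0).2 (hL i.succ).1 (hL i.succ).2
        (hprop 0 i.succ (Fin.succ_ne_zero i).symm)
    have hEx : ∀ i : Fin m, ∃ H : P2, H.IsHomogeneous (d i.succ) ∧
        (Dop b (-a))^[d 0 + 1] (G i.succ * (L i.succ) ^ (e i.succ))
          = H * (L i.succ) ^ (e i.succ - (d 0 + 1)) :=
      fun i => existsH (hL i.succ).2 (hDsucc i) (d 0 + 1) (hG i.succ) (hkle i)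
    choose H hH1 hH2 using hEx
    have hsplit : (Dop b (-a))^[d 0 + 1] (∑ i : Fin (m + 1), G i * L i ^ (e i))
        = ∑ i : Fin m, H i * (L i.succ) ^ (e i.succ - (d 0 + 1)) := by
      rw [← Module.End.pow_apply, map_sum, Fin.sum_univ_succ]
      rw [Module.End.pow_apply, iter_keep hD0, iter_kill (d 0 + 1) (hG 0)
        (by omega), zero_mul, zero_add]
      exact Finset.sum_congr rfl fun i _ => by rw [Module.End.pow_apply, hH2 i]
    have hiter : (0 : P2)
        = ∑ i : Fin m, H i * (L i.succ) ^ (e i.succ - (d 0 + 1)) := by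
      have h1 := congrArg (fun p => (Dop b (-a))^[d 0 + 1] p) h0
      try simp only at h1
      rw [iter_zero, hsplit] at h1
      exact h1
    have hz : ∀ i : Fin m, H i = 0 := by
      apply ih (fun i => L i.succ) H (fun i => d i.succ)
        (fun i => e i.succ - (d 0 + 1))
        (fun i => hL i.succ)
        (fun i j hij => hprop i.succ j.succ
          (fun h => hij (Fin.succ_injective _ h)))
        hH1
        (by
          intro i
          show (∑ j : Fin m, (d j.succ + 1)) ≤ e i.succ - (d 0 + 1) + (d i.succ + 1)
          have := hcond' i
          have := hsle i
          omega)
        hiter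
    have hsuc : ∀ i : Fin m, G i.succ = 0 := by
      intro i
      apply killA (hL i.succ).2 (hDsucc i) (hcne i) (d 0 + 1) (hG i.succ) (hkle i)
      rw [hH2 i, hz i, zero_mul]
    have h00 : G 0 * L 0 ^ (e 0) = 0 := by
      rw [Fin.sum_univ_succ] at h0
      simp only [hsuc, zero_mul, Finset.sum_const_zero, add_zero] at h0
      exact h0.symm
    have hG0 : G 0 = 0 :=
      (mul_eq_zero.mp h00).resolve_right (pow_ne_zero _ (hL 0).1)
    intro i
    refine Fin.cases hG0 hsuc i

end JordanAux

open JordanAux in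
theorem jordan_lemma (n m : ℕ) (L G : Fin m → MvPolynomial (Fin 2) ℂ)
    (g : Fin m → ℕ)
    (hL : ∀ i, IsLinearForm (L i))
    (hprop : ∀ i j, i ≠ j → ¬ Proportional (L i) (L j))
    (hg : ∀ i, 1 ≤ g i)
    (hG : ∀ i, (G i).IsHomogeneous (g i - 1))
    (hsum : ∑ i, g i ≤ n + 1)
    (h0 : (0 : MvPolynomial (Fin 2) ℂ) = ∑ i, G i * (L i) ^ (n - g i + 1)) :
    ∀ i, G i = 0 := by
  apply jordan_aux m L G (fun i => g i - 1) (fun i => n - g i + 1) hL hprop hG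
  · intro i
    show (∑ j, (g j - 1 + 1)) ≤ (n - g i + 1) + (g i - 1 + 1)
    have h1 : (∑ j, (g j - 1 + 1)) = ∑ j, g j :=
      Finset.sum_congr rfl fun j _ => by have := hg j; omega
    have h2 : g i ≤ ∑ j, g j :=
      Finset.single_le_sum (f := g) (fun j _ => Nat.zero_le _) (Finset.mem_univ i)
    have := hg i
    omega
  · exact h0
end

section
/- Let φ = ∏_{i=1}^m (b_i ∂_0 - a_i ∂_1)^{g_i} be a product of powers of pairwise non-proportional differential operators of degree ∑ g_i = s, and set L_i = a_i x_0 + b_i x_1. Then a binary form f of degree n ≥ s satisfies φ ∘ f = 0 if and only if f admits a representation f = G_1·L_1^{n-g_1+1} + ... + G_m·L_m^{n-g_m+1} with each G_i a binary form of degree g_i - 1. -/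
open MvPolynomial

namespace GAD

abbrev S2 := MvPolynomial (Fin 2) ℂ

lemma pderiv_comm01 (f : S2) : pderiv 0 (pderiv 1 f) = pderiv 1 (pderiv 0 f) := by
  induction f using MvPolynomial.induction_on' with
  | add p q hp hq => simp only [map_add, hp, hq]
  | monomial m c =>
    simp only [pderiv_monomial]
    have h10 : ((m - Finsupp.single 1 1 : Fin 2 →₀ ℕ)) 0 = m 0 := by
      simp [Finsupp.tsub_apply, Finsupp.single_apply]
    have h01 : ((m - Finsupp.single 0 1 : Fin 2 →₀ ℕ)) 1 = m 1 := by
      simp [Finsupp.tsub_apply, Finsupp.single_apply]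
    have hE : (m - Finsupp.single 1 1 - Finsupp.single 0 1 : Fin 2 →₀ ℕ)
        = m - Finsupp.single 0 1 - Finsupp.single 1 1 := by
      ext a
      simp [Finsupp.tsub_apply, Finsupp.single_apply]
      omega
    rw [h10, h01, hE]
    congr 1
    ring

noncomputable def ptow (m : Fin 2 →₀ ℕ) (f : S2) : S2 :=
  (fun p => pderiv (0 : Fin 2) p)^[m 0] ((fun p => pderiv (1 : Fin 2) p)^[m 1] f)

lemma iterate_pderiv_add (i : Fin 2) (k : ℕ) (f g : S2) :
    (fun p => pderiv i p)^[k] (f + g)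
      = (fun p => pderiv i p)^[k] f + (fun p => pderiv i p)^[k] g := by
  induction k generalizing f g with
  | zero => rfl
  | succ k ih => simp [Function.iterate_succ_apply, map_add, ih]

lemma iterate_pderiv_smul (i : Fin 2) (k : ℕ) (c : ℂ) (f : S2) :
    (fun p => pderiv i p)^[k] (c • f) = c • (fun p => pderiv i p)^[k] f := by
  induction k generalizing f with
  | zero => rfl
  | succ k ih => simp [Function.iterate_succ_apply, ih]

lemma iterate_pderiv_zero (i : Fin 2) (k : ℕ) :
    (fun p => pderiv i p)^[k] (0 : S2) = 0 := by
  induction k with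
  | zero => rfl
  | succ k ih => simp [Function.iterate_succ_apply, ih]

lemma ptow_add (m : Fin 2 →₀ ℕ) (f g : S2) : ptow m (f + g) = ptow m f + ptow m g := by
  simp [ptow, iterate_pderiv_add]

lemma ptow_smul (m : Fin 2 →₀ ℕ) (c : ℂ) (f : S2) : ptow m (c • f) = c • ptow m f := by
  simp [ptow, iterate_pderiv_smul]

lemma ptow_zero (m : Fin 2 →₀ ℕ) : ptow m (0 : S2) = 0 := by
  simp [ptow, iterate_pderiv_zero]

lemma contractOp_eq_sum (φ f : S2) :
    contractOp φ f = (AddMonoidAlgebra.coeff φ).sum fun m c => c • ptow m f := rfl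

lemma contractOp_monomial (m : Fin 2 →₀ ℕ) (c : ℂ) (f : S2) :
    contractOp (monomial m c) f = c • ptow m f := by
  rw [contractOp_eq_sum]; exact sum_monomial_eq (by simp)

lemma contractOp_add_left (φ ψ f : S2) :
    contractOp (φ + ψ) f = contractOp φ f + contractOp ψ f := by
  simp only [contractOp_eq_sum]
  exact Finsupp.sum_add_index' (fun a => by simp) (fun a b₁ b₂ => add_smul _ _ _)

lemma contractOp_add_right (φ f g : S2) :
    contractOp φ (f + g) = contractOp φ f + contractOp φ g := by
  simp only [contractOp_eq_sum, Finsupp.sum, ptow_add, smul_add, Finset.sum_add_distrib]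

lemma contractOp_smul_right (φ : S2) (c : ℂ) (f : S2) :
    contractOp φ (c • f) = c • contractOp φ f := by
  simp only [contractOp_eq_sum, Finsupp.sum, ptow_smul, Finset.smul_sum, smul_comm c]

lemma contractOp_zero_right (φ : S2) : contractOp φ 0 = 0 := by
  simp [contractOp_eq_sum, Finsupp.sum, ptow_zero]

lemma contractOp_zero_left (f : S2) : contractOp 0 f = 0 := by
  simp [contractOp_eq_sum]

lemma contractOp_sub_left (φ ψ f : S2) :
    contractOp (φ - ψ) f = contractOp φ f - contractOp ψ f := by
  have h := contractOp_add_left (φ - ψ) ψ f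
  rw [sub_add_cancel] at h
  rw [h]; ring

lemma ptow_addm (m m' : Fin 2 →₀ ℕ) (f : S2) : ptow (m + m') f = ptow m (ptow m' f) := by
  have comm : ∀ (j l : ℕ) (h : S2),
      (fun p => pderiv (0:Fin 2) p)^[j] ((fun p => pderiv (1:Fin 2) p)^[l] h)
      = (fun p => pderiv (1:Fin 2) p)^[l] ((fun p => pderiv (0:Fin 2) p)^[j] h) := by
    intro j l h
    exact (Function.Commute.iterate_iterate (g := fun p => pderiv (1:Fin 2) p)
      (fun x => pderiv_comm01 x) j l h)
  simp only [ptow, Finsupp.add_apply]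
  rw [Function.iterate_add_apply, Function.iterate_add_apply, comm]

lemma contractOp_mul (φ ψ f : S2) :
    contractOp (φ * ψ) f = contractOp φ (contractOp ψ f) := by
  induction φ using MvPolynomial.induction_on' with
  | add p q hp hq => simp only [add_mul, contractOp_add_left, hp, hq]
  | monomial m c =>
    induction ψ using MvPolynomial.induction_on' with
    | add p q hp hq => simp only [mul_add, contractOp_add_left, contractOp_add_right,
        contractOp_smul_right, hp, hq]
    | monomial m' c' =>
      rw [monomial_mul, contractOp_monomial, contractOp_monomial, contractOp_monomial,
        ptow_smul, ptow_addm, mul_smul]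

lemma contractOp_one (f : S2) : contractOp 1 f = f := by
  have : (1 : S2) = monomial 0 1 := by simp [monomial_zero']
  rw [this, contractOp_monomial]
  simp [ptow]

noncomputable def Dfun (a b : ℂ) (f : S2) : S2 := b • pderiv 0 f - a • pderiv 1 f

noncomputable def Lin (a b : ℂ) : S2 := C a * X 0 + C b * X 1

noncomputable def Pop (a b : ℂ) : S2 := C b * X 0 - C a * X 1

lemma degree_fin2 (d : Fin 2 →₀ ℕ) : d.degree = d 0 + d 1 := by
  rw [Finsupp.degree, ← Fin.sum_univ_two (f := fun i => d i)]
  apply Finset.sum_subset (Finset.subset_univ _)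
  intro x _ hx
  simpa using Finsupp.notMem_support_iff.mp hx

lemma isHomog_iff (φ : S2) (n : ℕ) :
    φ.IsHomogeneous n ↔ ∀ d : Fin 2 →₀ ℕ, coeff d φ ≠ 0 → d 0 + d 1 = n := by
  unfold MvPolynomial.IsHomogeneous MvPolynomial.IsWeightedHomogeneous
  constructor
  · intro h d hd
    have := h hd
    rw [← degree_fin2 d, Finsupp.degree_eq_weight_one]
    exact this
  · intro h d hd
    have := h d hd
    rw [show (1 : Fin 2 → ℕ) = fun _ => 1 from rfl, ← Finsupp.degree_eq_weight_one (R := ℕ), degree_fin2]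
    exact this

lemma pderiv_isHomog {f : S2} {k : ℕ} (i : Fin 2) (hf : f.IsHomogeneous k) :
    (pderiv i f).IsHomogeneous (k - 1) := by
  conv_lhs => rw [f.as_sum]
  rw [map_sum]
  apply MvPolynomial.IsHomogeneous.sum
  intro m hm
  rw [pderiv_monomial]
  by_cases h0 : m i = 0
  · simp only [h0, Nat.cast_zero, mul_zero, monomial_zero]
    exact isHomogeneous_zero _ _ _
  · apply isHomogeneous_monomial
    have hdeg : m.degree = k := by
      rw [degree_fin2]
      exact (isHomog_iff f k).mp hf m (mem_support_iff.mp hm)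
    rw [degree_fin2] at hdeg ⊢
    have hsub : ∀ j : Fin 2, ((m - Finsupp.single i 1 : Fin 2 →₀ ℕ)) j
        = m j - (if i = j then 1 else 0) := by
      intro j; rw [Finsupp.tsub_apply, Finsupp.single_apply]
    rw [hsub 0, hsub 1]
    fin_cases i <;> simp_all <;> omega

lemma smul_isHomog {f : S2} {k : ℕ} (c : ℂ) (hf : f.IsHomogeneous k) :
    (c • f).IsHomogeneous k := by
  rw [MvPolynomial.smul_eq_C_mul]
  simpa using (MvPolynomial.isHomogeneous_C (Fin 2) c).mul hf

lemma Dfun_isHomog {f : S2} {k : ℕ} (a b : ℂ) (hf : f.IsHomogeneous k) :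
    (Dfun a b f).IsHomogeneous (k - 1) :=
  (smul_isHomog b (pderiv_isHomog 0 hf)).sub (smul_isHomog a (pderiv_isHomog 1 hf))

lemma Dfun_iterate_isHomog {f : S2} {k : ℕ} (a b : ℂ) (g : ℕ) (hf : f.IsHomogeneous k) :
    ((Dfun a b)^[g] f).IsHomogeneous (k - g) := by
  induction g generalizing f k with
  | zero => simpa using hf
  | succ g ih =>
    rw [Function.iterate_succ_apply]
    have := ih (Dfun_isHomog a b hf)
    rwa [Nat.sub_sub, Nat.add_comm 1 g] at this

lemma isHomog_zero_exists_C {f : S2} (hf : f.IsHomogeneous 0) : ∃ c : ℂ, f = C c := by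
  refine ⟨coeff 0 f, ?_⟩
  ext d
  rw [coeff_C]
  split_ifs with h
  · rw [← h]
  · by_contra hc
    have := (isHomog_iff f 0).mp hf d (by simpa using hc)
    apply h
    ext j
    fin_cases j <;> simp <;> omega

lemma ptow_single0 (f : S2) : ptow (Finsupp.single 0 1) f = pderiv 0 f := by
  have h0 : (Finsupp.single (0:Fin 2) 1) 0 = 1 := by simp
  have h1 : (Finsupp.single (0:Fin 2) 1) 1 = 0 := by simp
  simp [ptow, h0, h1]

lemma ptow_single1 (f : S2) : ptow (Finsupp.single 1 1) f = pderiv 1 f := by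
  have h0 : (Finsupp.single (1:Fin 2) 1) 0 = 0 := by simp
  have h1 : (Finsupp.single (1:Fin 2) 1) 1 = 1 := by simp
  simp [ptow, h0, h1]

lemma contractOp_Pop (a b : ℂ) (f : S2) : contractOp (Pop a b) f = Dfun a b f := by
  rw [Pop, contractOp_sub_left, C_mul_X_eq_monomial, C_mul_X_eq_monomial,
    contractOp_monomial, contractOp_monomial, ptow_single0, ptow_single1, Dfun]

lemma contractOp_Pop_pow (a b : ℂ) (g : ℕ) (f : S2) :
    contractOp (Pop a b ^ g) f = (Dfun a b)^[g] f := by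
  induction g generalizing f with
  | zero => rw [pow_zero, contractOp_one]; rfl
  | succ g ih =>
    rw [pow_succ, contractOp_mul, contractOp_Pop, ih, Function.iterate_succ_apply]

-- product rule
lemma Dfun_mul_lin (a b : ℂ) (G : S2) (t : ℕ) :
    Dfun a b (G * Lin a b ^ t) = Dfun a b G * Lin a b ^ t := by
  have pL0 : pderiv 0 (Lin a b) = C a := by simp [Lin]
  have pL1 : pderiv 1 (Lin a b) = C b := by simp [Lin]
  simp only [Dfun, pderiv_mul, pderiv_pow, pL0, pL1]
  rw [MvPolynomial.smul_eq_C_mul, MvPolynomial.smul_eq_C_mul,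
    MvPolynomial.smul_eq_C_mul, MvPolynomial.smul_eq_C_mul]
  ring

lemma Dfun_kill_of_isHomog {G : S2} {d : ℕ} (a b : ℂ) (hG : G.IsHomogeneous d) :
    (Dfun a b)^[d + 1] G = 0 := by
  induction d generalizing G with
  | zero =>
    obtain ⟨c, rfl⟩ := isHomog_zero_exists_C hG
    simp [Dfun, pderiv_C]
  | succ d ih =>
    rw [Function.iterate_succ_apply]
    exact ih (by simpa using Dfun_isHomog a b hG)

lemma Dfun_iter_kill_block {G : S2} {d : ℕ} (a b : ℂ) (g t : ℕ) (hG : G.IsHomogeneous d)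
    (hd : d < g) : (Dfun a b)^[g] (G * Lin a b ^ t) = 0 := by
  have key : ∀ k, (Dfun a b)^[k] (G * Lin a b ^ t) = (Dfun a b)^[k] G * Lin a b ^ t := by
    intro k
    induction k with
    | zero => rfl
    | succ k ihk =>
        rw [Function.iterate_succ_apply', ihk, Dfun_mul_lin]
        rw [Function.iterate_succ_apply' (Dfun a b) k G]
  rw [key]
  obtain ⟨e, rfl⟩ : ∃ e, g = (d + 1) + e := ⟨g - (d+1), by omega⟩
  rw [Nat.add_comm, Function.iterate_add_apply, Dfun_kill_of_isHomog a b hG]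
  have : ∀ j, (Dfun a b)^[j] (0:S2) = 0 := by
    intro j; induction j with
    | zero => rfl
    | succ j ihj => rw [Function.iterate_succ_apply', ihj]; simp [Dfun]
  rw [this]
  exact zero_mul _
lemma chainRule (v : Fin 2 → S2) (i : Fin 2) (f : S2) :
    pderiv i (aeval v f)
      = aeval v (pderiv 0 f) * pderiv i (v 0) + aeval v (pderiv 1 f) * pderiv i (v 1) := by
  induction f using MvPolynomial.induction_on with
  | C c => simp
  | add p q hp hq => simp only [map_add, hp, hq]; ring
  | mul_X p j hp =>
    have hXj : ∀ l : Fin 2, pderiv l (p * X j)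
        = pderiv l p * X j + p * pderiv l (X j) := by intro l; rw [pderiv_mul]
    simp only [map_mul, map_add, pderiv_mul, hp, aeval_X]
    have : pderiv i (v j) = aeval (R := ℂ) v (pderiv 0 (X j)) * pderiv i (v 0)
        + aeval (R := ℂ) v (pderiv 1 (X j)) * pderiv i (v 1) := by
      fin_cases j <;> simp [pderiv_X_self, pderiv_X_of_ne]
    rw [this]
    ring

lemma aeval_aeval (v w : Fin 2 → S2) (f : S2) :
    aeval v (aeval w f) = aeval (fun i => aeval v (w i)) f := by
  have : (aeval v).comp (aeval w) = (aeval fun i => aeval v (w i) : S2 →ₐ[ℂ] S2) := by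
    apply MvPolynomial.algHom_ext
    intro i
    simp
  exact congrFun (congrArg DFunLike.coe this) f

-- substitution data for (a,b) ≠ (0,0)
structure Subst where
  a : ℂ
  b : ℂ
  c : ℂ
  d : ℂ
  hdet : b * c - a * d = 1

namespace Subst
variable (σ : Subst)

noncomputable def v : Fin 2 → S2 := ![C σ.a * X 0 + C σ.b * X 1, C σ.c * X 0 + C σ.d * X 1]
noncomputable def w : Fin 2 → S2 := ![C σ.b * X 1 - C σ.d * X 0, C σ.c * X 0 - C σ.a * X 1]

noncomputable def T (f : S2) : S2 := aeval σ.v f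
noncomputable def Tinv (f : S2) : S2 := aeval σ.w f

lemma hdC : (C σ.b * C σ.c - C σ.a * C σ.d : S2) = 1 := by
  have hd' : (C (σ.b * σ.c - σ.a * σ.d) : S2) = C 1 := by rw [σ.hdet]
  rw [map_sub, map_mul, map_mul] at hd'
  simpa using hd'

lemma vw (i : Fin 2) : aeval σ.v (σ.w i) = X i := by
  have hd := σ.hdC
  fin_cases i <;>
    simp only [v, w, Fin.isValue, Fin.zero_eta, Fin.mk_one, Matrix.cons_val_zero,
      Matrix.cons_val_one, Matrix.head_cons, map_add, map_sub, map_mul, aeval_C, aeval_X,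
      algebraMap_eq]
  · linear_combination (X 0 : S2) * hd
  · linear_combination (X 1 : S2) * hd

lemma wv (i : Fin 2) : aeval σ.w (σ.v i) = X i := by
  have hd := σ.hdC
  fin_cases i <;>
    simp only [v, w, Fin.isValue, Fin.zero_eta, Fin.mk_one, Matrix.cons_val_zero,
      Matrix.cons_val_one, Matrix.head_cons, map_add, map_sub, map_mul, aeval_C, aeval_X,
      algebraMap_eq]
  · linear_combination (X 0 : S2) * hd
  · linear_combination (X 1 : S2) * hd

lemma T_Tinv (f : S2) : σ.T (σ.Tinv f) = f := by
  rw [T, Tinv, aeval_aeval]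
  have : (fun i => aeval σ.v (σ.w i)) = X := by funext i; exact σ.vw i
  rw [this]
  simp [aeval_X_left]

lemma Tinv_T (f : S2) : σ.Tinv (σ.T f) = f := by
  rw [T, Tinv, aeval_aeval]
  have : (fun i => aeval σ.w (σ.v i)) = X := by funext i; exact σ.wv i
  rw [this]
  simp [aeval_X_left]

end Subst

namespace Subst
variable (σ : Subst)

lemma v_isHomog (i : Fin 2) : (σ.v i).IsHomogeneous 1 := by
  fin_cases i <;>
    exact (MvPolynomial.isHomogeneous_C_mul_X _ _).add (MvPolynomial.isHomogeneous_C_mul_X _ _)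

lemma w_isHomog (i : Fin 2) : (σ.w i).IsHomogeneous 1 := by
  fin_cases i <;>
    exact (MvPolynomial.isHomogeneous_C_mul_X _ _).sub (MvPolynomial.isHomogeneous_C_mul_X _ _)

lemma T_isHomog {f : S2} {k : ℕ} (hf : f.IsHomogeneous k) : (σ.T f).IsHomogeneous k := by
  simpa [T] using hf.aeval σ.v σ.v_isHomog

lemma Tinv_isHomog {f : S2} {k : ℕ} (hf : f.IsHomogeneous k) : (σ.Tinv f).IsHomogeneous k := by
  simpa [Tinv] using hf.aeval σ.w σ.w_isHomog

lemma D_T (f : S2) : Dfun σ.a σ.b (σ.T f) = σ.T (pderiv 1 f) := by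
  have h0 := chainRule σ.v 0 f
  have h1 := chainRule σ.v 1 f
  have pv00 : pderiv 0 (σ.v 0) = C σ.a := by simp [v]
  have pv10 : pderiv 1 (σ.v 0) = C σ.b := by simp [v]
  have pv01 : pderiv 0 (σ.v 1) = C σ.c := by simp [v]
  have pv11 : pderiv 1 (σ.v 1) = C σ.d := by simp [v]
  rw [pv00, pv01] at h0
  rw [pv10, pv11] at h1
  simp only [Dfun, T] at h0 h1 ⊢
  rw [h0, h1, MvPolynomial.smul_eq_C_mul, MvPolynomial.smul_eq_C_mul]
  linear_combination (aeval (R := ℂ) σ.v (pderiv 1 f)) * σ.hdC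

end Subst

noncomputable def integ (h : S2) : S2 :=
  ∑ m ∈ h.support, monomial (m + Finsupp.single 1 1) ((m 1 + 1 : ℂ)⁻¹ * coeff m h)

lemma pderiv_integ (h : S2) : pderiv 1 (integ h) = h := by
  rw [integ, map_sum]
  conv_rhs => rw [h.as_sum]
  apply Finset.sum_congr rfl
  intro m hm
  rw [pderiv_monomial]
  have he : (m + Finsupp.single 1 1 - Finsupp.single 1 1 : Fin 2 →₀ ℕ) = m :=
    add_tsub_cancel_right _ _
  have hv : ((m + Finsupp.single 1 1 : Fin 2 →₀ ℕ)) 1 = m 1 + 1 := by simp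
  rw [he, hv]
  congr 1
  have hne : ((m 1 + 1 : ℕ) : ℂ) ≠ 0 := Nat.cast_ne_zero.mpr (Nat.succ_ne_zero _)
  push_cast at hne ⊢
  field_simp

lemma integ_isHomog {h : S2} {k : ℕ} (hh : h.IsHomogeneous k) :
    (integ h).IsHomogeneous (k + 1) := by
  apply MvPolynomial.IsHomogeneous.sum
  intro m hm
  apply isHomogeneous_monomial
  rw [degree_fin2]
  have h0 : ((m + Finsupp.single 1 1 : Fin 2 →₀ ℕ)) 0 = m 0 := by simp
  have h1 : ((m + Finsupp.single 1 1 : Fin 2 →₀ ℕ)) 1 = m 1 + 1 := by simp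
  rw [h0, h1]
  have := (isHomog_iff h k).mp hh m (mem_support_iff.mp hm)
  omega

lemma Dfun_surj (σ : Subst) {h : S2} {k : ℕ} (hh : h.IsHomogeneous k) :
    ∃ f : S2, f.IsHomogeneous (k + 1) ∧ Dfun σ.a σ.b f = h := by
  refine ⟨σ.T (integ (σ.Tinv h)), σ.T_isHomog (integ_isHomog (σ.Tinv_isHomog hh)), ?_⟩
  rw [σ.D_T, pderiv_integ, σ.T_Tinv]

lemma Dfun_iter_surj (σ : Subst) (g : ℕ) {h : S2} {k : ℕ} (hh : h.IsHomogeneous k) :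
    ∃ f : S2, f.IsHomogeneous (k + g) ∧ (Dfun σ.a σ.b)^[g] f = h := by
  induction g generalizing h k with
  | zero => exact ⟨h, by simpa using hh, rfl⟩
  | succ g ih =>
    obtain ⟨f', hf', hDf'⟩ := ih hh
    obtain ⟨f, hf, hDf⟩ := Dfun_surj σ hf'
    refine ⟨f, by rw [show k + (g+1) = (k+g) + 1 by omega]; exact hf, ?_⟩
    rw [Function.iterate_succ_apply, hDf, hDf']

noncomputable def mkSubst (a b : ℂ) (hab : ¬(a = 0 ∧ b = 0)) : Subst :=
  if ha : a = 0 then ⟨a, b, b⁻¹, 0, by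
    have hb : b ≠ 0 := fun h => hab ⟨ha, h⟩
    field_simp <;> simp⟩
  else ⟨a, b, 0, -a⁻¹, by field_simp <;> simp⟩

@[simp] lemma mkSubst_a (a b : ℂ) (hab) : (mkSubst a b hab).a = a := by
  unfold mkSubst; split_ifs <;> rfl

@[simp] lemma mkSubst_b (a b : ℂ) (hab) : (mkSubst a b hab).b = b := by
  unfold mkSubst; split_ifs <;> rfl

noncomputable def Hgs (k : ℕ) : Submodule ℂ S2 := homogeneousSubmodule (Fin 2) ℂ k

noncomputable def exps (k : ℕ) (j : Fin (k+1)) : Fin 2 →₀ ℕ :=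
  Finsupp.single 0 (k - (j : ℕ)) + Finsupp.single 1 (j : ℕ)

lemma exps_apply0 (k : ℕ) (j : Fin (k+1)) : exps k j 0 = k - (j : ℕ) := by
  simp [exps]

lemma exps_apply1 (k : ℕ) (j : Fin (k+1)) : exps k j 1 = (j : ℕ) := by
  simp [exps]

lemma exps_degree (k : ℕ) (j : Fin (k+1)) : (exps k j).degree = k := by
  rw [degree_fin2, exps_apply0, exps_apply1]
  omega

lemma exps_injective (k : ℕ) : Function.Injective (exps k) := by
  intro j j' h
  have := congrFun (congrArg (DFunLike.coe) h) 1
  rw [exps_apply1, exps_apply1] at this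
  exact Fin.ext this

lemma exps_mem (k : ℕ) {d : Fin 2 →₀ ℕ} (hd : d 0 + d 1 = k) :
    ∃ j : Fin (k+1), d = exps k j := by
  have hlt : d 1 < k + 1 := by omega
  refine ⟨⟨d 1, hlt⟩, ?_⟩
  have h0 := exps_apply0 k ⟨d 1, hlt⟩
  have h1 := exps_apply1 k ⟨d 1, hlt⟩
  simp only [Fin.val_mk] at h0 h1
  apply Finsupp.ext
  intro i
  induction i using Fin.cases with
  | zero => rw [h0]; omega
  | succ j =>
    have hj : j = 0 := Subsingleton.elim _ _
    subst hj
    rw [show (Fin.succ 0 : Fin 2) = 1 from rfl, h1]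

lemma decomp {f : S2} {k : ℕ} (hf : f.IsHomogeneous k) :
    f = ∑ j : Fin (k+1), monomial (exps k j) (coeff (exps k j) f) := by
  have hsub : f.support ⊆ Finset.image (exps k) Finset.univ := by
    intro d hd
    obtain ⟨j, hj⟩ := exps_mem k ((isHomog_iff f k).mp hf d (mem_support_iff.mp hd))
    exact Finset.mem_image.mpr ⟨j, Finset.mem_univ _, hj.symm⟩
  conv_lhs => rw [f.as_sum]
  rw [Finset.sum_subset hsub (fun d _ hd => by
    rw [notMem_support_iff.mp hd, monomial_zero])]
  rw [Finset.sum_image (fun j _ j' _ h => exps_injective k h)]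

lemma monomial_exps_mem (k : ℕ) (j : Fin (k+1)) (c : ℂ) :
    (monomial (exps k j) c) ∈ Hgs k :=
  (mem_homogeneousSubmodule _ _).mpr (isHomogeneous_monomial c (exps_degree k j))

noncomputable def fromF (k : ℕ) : (Fin (k+1) → ℂ) →ₗ[ℂ] S2 :=
  ∑ j : Fin (k+1), (monomial (exps k j)).comp (LinearMap.proj j)

lemma fromF_apply (k : ℕ) (c : Fin (k+1) → ℂ) :
    fromF k c = ∑ j : Fin (k+1), monomial (exps k j) (c j) := by
  simp [fromF, LinearMap.sum_apply]

noncomputable def fromF' (k : ℕ) : (Fin (k+1) → ℂ) →ₗ[ℂ] Hgs k :=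
  (fromF k).codRestrict (Hgs k) (fun c => by
    rw [fromF_apply]
    exact Submodule.sum_mem _ (fun j _ => monomial_exps_mem k j (c j)))

noncomputable def toF (k : ℕ) : Hgs k →ₗ[ℂ] (Fin (k+1) → ℂ) :=
  LinearMap.pi (fun j => (lcoeff ℂ (exps k j)).comp (Submodule.subtype _))

lemma toF_apply (k : ℕ) (f : Hgs k) (j : Fin (k+1)) :
    toF k f j = coeff (exps k j) (f : S2) := rfl

noncomputable def HgsEquiv (k : ℕ) : Hgs k ≃ₗ[ℂ] (Fin (k+1) → ℂ) := by
  refine LinearEquiv.ofLinear (toF k) (fromF' k) ?_ ?_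
  · apply LinearMap.ext
    intro c
    funext j
    have : ((fromF' k c : Hgs k) : S2) = ∑ j' : Fin (k+1), monomial (exps k j') (c j') := by
      rw [← fromF_apply]; rfl
    simp only [LinearMap.comp_apply, LinearMap.id_apply, toF_apply, this]
    rw [coeff_sum]
    rw [Finset.sum_eq_single j]
    · simp [coeff_monomial]
    · intro j' _ hne
      rw [coeff_monomial, if_neg (fun h => hne (exps_injective k h))]
    · intro h
      exact absurd (Finset.mem_univ j) h
  · apply LinearMap.ext
    intro f
    apply Subtype.ext
    have hf : (f : S2).IsHomogeneous k := (mem_homogeneousSubmodule _ _).mp f.2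
    have : ((fromF' k (toF k f) : Hgs k) : S2) = ∑ j' : Fin (k+1),
        monomial (exps k j') (coeff (exps k j') (f : S2)) := by
      rw [show ((fromF' k (toF k f) : Hgs k) : S2) = fromF k (toF k f) from rfl, fromF_apply]
      simp only [toF_apply]
    rw [LinearMap.comp_apply, LinearMap.id_apply, this]
    exact (decomp hf).symm

instance (k : ℕ) : FiniteDimensional ℂ (Hgs k) :=
  Module.Finite.equiv (HgsEquiv k).symm

lemma finrank_Hgs (k : ℕ) : Module.finrank ℂ (Hgs k) = k + 1 := by
  rw [LinearEquiv.finrank_eq (HgsEquiv k), Module.finrank_fin_fun]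

noncomputable def ctr (φ : S2) : S2 →ₗ[ℂ] S2 where
  toFun := contractOp φ
  map_add' := contractOp_add_right φ
  map_smul' := contractOp_smul_right φ

@[simp] lemma ctr_apply (φ f : S2) : ctr φ f = contractOp φ f := rfl

lemma ctr_pop_mapsTo (a b : ℂ) (g k : ℕ) :
    ∀ x ∈ Hgs k, ctr (Pop a b ^ g) x ∈ Hgs (k - g) := by
  intro f hf
  have hf' : f.IsHomogeneous k := (mem_homogeneousSubmodule _ _).mp hf
  show contractOp _ _ ∈ _
  rw [contractOp_Pop_pow]
  exact (mem_homogeneousSubmodule _ _).mpr (Dfun_iterate_isHomog a b g hf')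

noncomputable def cL (a b : ℂ) (g k : ℕ) : Hgs k →ₗ[ℂ] Hgs (k - g) :=
  (ctr (Pop a b ^ g)).restrict (ctr_pop_mapsTo a b g k)

lemma cL_apply (a b : ℂ) (g k : ℕ) (x : Hgs k) :
    ((cL a b g k x : Hgs (k-g)) : S2) = contractOp (Pop a b ^ g) (x : S2) := rfl

lemma cL_surj {a b : ℂ} (hab : ¬(a = 0 ∧ b = 0)) (g k : ℕ) (hgk : g ≤ k) :
    Function.Surjective (cL a b g k) := by
  intro y
  have hy : (y : S2).IsHomogeneous (k - g) := (mem_homogeneousSubmodule _ _).mp y.2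
  obtain ⟨f, hf, hDf⟩ := Dfun_iter_surj (mkSubst a b hab) g hy
  rw [mkSubst_a, mkSubst_b] at hDf
  have hfk : f.IsHomogeneous k := by
    rwa [show k - g + g = k by omega] at hf
  refine ⟨⟨f, (mem_homogeneousSubmodule _ _).mpr hfk⟩, ?_⟩
  apply Subtype.ext
  rw [cL_apply, contractOp_Pop_pow]
  exact hDf

lemma finrank_ker_cL {a b : ℂ} (hab : ¬(a = 0 ∧ b = 0)) (g k : ℕ) (hgk : g ≤ k) :
    Module.finrank ℂ (LinearMap.ker (cL a b g k)) = g := by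
  have h := LinearMap.finrank_range_add_finrank_ker (cL a b g k)
  rw [LinearMap.range_eq_top.mpr (cL_surj hab g k hgk), finrank_top] at h
  rw [finrank_Hgs, finrank_Hgs] at h
  omega

lemma Lin_isHomog (a b : ℂ) : (Lin a b).IsHomogeneous 1 :=
  (MvPolynomial.isHomogeneous_C_mul_X _ _).add (MvPolynomial.isHomogeneous_C_mul_X _ _)

lemma Lin_ne_zero {a b : ℂ} (hab : ¬(a = 0 ∧ b = 0)) : Lin a b ≠ 0 := by
  intro h
  have hne : (Finsupp.single (0:Fin 2) 1 : Fin 2 →₀ ℕ) ≠ Finsupp.single 1 1 := by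
    intro hh
    have := congrFun (congrArg (DFunLike.coe) hh) 0
    simp at this
  have h0 : coeff (Finsupp.single 0 1) (Lin a b) = a := by
    rw [Lin, coeff_add, C_mul_X_eq_monomial, C_mul_X_eq_monomial,
      coeff_monomial, coeff_monomial, if_pos rfl, if_neg (Ne.symm hne)]
    ring
  have h1 : coeff (Finsupp.single 1 1) (Lin a b) = b := by
    rw [Lin, coeff_add, C_mul_X_eq_monomial, C_mul_X_eq_monomial,
      coeff_monomial, coeff_monomial, if_pos rfl, if_neg hne]
    ring
  rw [h] at h0 h1
  simp only [coeff_zero] at h0 h1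
  exact hab ⟨h0.symm, h1.symm⟩

noncomputable def mulInto (a b : ℂ) (t d k : ℕ) (hk : d + t = k) : Hgs d →ₗ[ℂ] Hgs k :=
  ((LinearMap.mulLeft ℂ (Lin a b ^ t)).comp (Submodule.subtype _)).codRestrict _ (fun G => by
    simp only [LinearMap.comp_apply, LinearMap.mulLeft_apply, Submodule.subtype_apply]
    have hG : (G : S2).IsHomogeneous d := (mem_homogeneousSubmodule _ _).mp G.2
    have hL : ((Lin a b ^ t : S2)).IsHomogeneous t := by
      simpa using (Lin_isHomog a b).pow t
    exact (mem_homogeneousSubmodule _ _).mpr (by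
      have := hL.mul hG
      rwa [show t + d = k by omega] at this))

lemma mulInto_apply (a b : ℂ) (t d k : ℕ) (hk : d + t = k) (G : Hgs d) :
    ((mulInto a b t d k hk G : Hgs k) : S2) = Lin a b ^ t * (G : S2) := rfl

lemma mulInto_inj {a b : ℂ} (hab : ¬(a = 0 ∧ b = 0)) (t d k : ℕ) (hk : d + t = k) :
    Function.Injective (mulInto a b t d k hk) := by
  intro x y hxy
  apply Subtype.ext
  have := congrArg (fun z : Hgs k => (z : S2)) hxy
  simp only [mulInto_apply] at this
  exact mul_left_cancel₀ (pow_ne_zero t (Lin_ne_zero hab)) this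

theorem ker_structure {a b : ℂ} (hab : ¬(a = 0 ∧ b = 0)) {g k : ℕ} (hg : 1 ≤ g)
    (hgk : g ≤ k) {f : S2} (hf : f.IsHomogeneous k) :
    (Dfun a b)^[g] f = 0 ↔
      ∃ G : S2, G.IsHomogeneous (g - 1) ∧ f = G * Lin a b ^ (k - g + 1) := by
  have hk : (g - 1) + (k - g + 1) = k := by omega
  constructor
  · intro h0
    set M := LinearMap.range (mulInto a b (k - g + 1) (g-1) k hk) with hM
    set K := LinearMap.ker (cL a b g k) with hK
    have hMK : M ≤ K := by
      rintro x ⟨G, rfl⟩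
      rw [LinearMap.mem_ker]
      apply Subtype.ext
      rw [cL_apply, mulInto_apply, contractOp_Pop_pow, mul_comm]
      have hG : (G : S2).IsHomogeneous (g-1) := (mem_homogeneousSubmodule _ _).mp G.2
      exact (Dfun_iter_kill_block a b g (k - g + 1) hG (by omega)).trans rfl
    have hrM : Module.finrank ℂ M = g := by
      rw [hM, LinearMap.finrank_range_of_inj (mulInto_inj hab _ _ _ hk), finrank_Hgs]
      omega
    have hrK : Module.finrank ℂ K = g := finrank_ker_cL hab g k hgk
    have hMKeq : M = K := Submodule.eq_of_le_of_finrank_le hMK (by rw [hrM, hrK])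
    have hfK : (⟨f, (mem_homogeneousSubmodule _ _).mpr hf⟩ : Hgs k) ∈ K := by
      rw [hK, LinearMap.mem_ker]
      apply Subtype.ext
      rw [cL_apply, contractOp_Pop_pow]
      exact h0
    rw [← hMKeq] at hfK
    obtain ⟨G, hG⟩ := hfK
    refine ⟨(G : S2), (mem_homogeneousSubmodule _ _).mp G.2, ?_⟩
    have := congrArg (fun z : Hgs k => (z : S2)) hG
    simp only [mulInto_apply] at this
    rw [← this]
    ring
  · rintro ⟨G, hG, rfl⟩
    exact Dfun_iter_kill_block a b g (k - g + 1) hG (by omega)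

lemma Dfun_comm (a b a' b' : ℂ) (x : S2) :
    Dfun a b (Dfun a' b' x) = Dfun a' b' (Dfun a b x) := by
  rw [← contractOp_Pop, ← contractOp_Pop, ← contractOp_mul, mul_comm,
    contractOp_mul, contractOp_Pop, contractOp_Pop]

lemma Dfun_fcomm (a b a' b' : ℂ) :
    Function.Commute (Dfun a b) (Dfun a' b') := Dfun_comm a b a' b'

lemma eval_Lin_self (a b : ℂ) : eval ![b, -a] (Lin a b) = 0 := by
  simp [Lin]
  ring

lemma eval_Lin_other (a b a' b' : ℂ) : eval ![b, -a] (Lin a' b') = a' * b - b' * a := by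
  simp [Lin]
  ring

lemma nonprop_det {a b a' b' : ℂ} (hab : ¬(a = 0 ∧ b = 0))
    (hprop : ¬ ∃ c : ℂ, a' = c * a ∧ b' = c * b) : a' * b - b' * a ≠ 0 := by
  intro h
  apply hprop
  by_cases ha : a = 0
  · have hb : b ≠ 0 := fun h' => hab ⟨ha, h'⟩
    have h2 : a' * b = b' * a := sub_eq_zero.mp h
    have ha' : a' = 0 := by
      rw [ha, mul_zero] at h2
      rcases mul_eq_zero.mp h2 with h' | h'
      · exact h'
      · exact absurd h' hb
    refine ⟨b' / b, by rw [ha, mul_zero, ha'], by field_simp⟩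
  · have h2 : a' * b = b' * a := sub_eq_zero.mp h
    refine ⟨a' / a, by field_simp, ?_⟩
    rw [div_mul_eq_mul_div, eq_div_iff ha]
    linear_combination -h2

lemma block_inj {a b a' b' : ℂ} (hab : ¬(a = 0 ∧ b = 0)) (hab' : ¬(a' = 0 ∧ b' = 0))
    (hdet : a' * b - b' * a ≠ 0) {G : S2} {d t k : ℕ} (ht : 1 ≤ t) (hk : d + t = k)
    (hG : G.IsHomogeneous d) (h0 : Dfun a' b' (G * Lin a b ^ t) = 0) : G = 0 := by
  by_contra hGne
  set h : S2 := G * Lin a b ^ t with hh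
  have hhne : h ≠ 0 := mul_ne_zero hGne (pow_ne_zero _ (Lin_ne_zero hab))
  have hk1 : 1 ≤ k := by omega
  have hhom : h.IsHomogeneous k := by
    have := hG.mul ((Lin_isHomog a b).pow t)
    rwa [one_mul, hk] at this
  have h1 : (Dfun a' b')^[1] h = 0 := by simpa using h0
  obtain ⟨G', hG', hrep⟩ := (ker_structure hab' le_rfl hk1 hhom).mp h1
  obtain ⟨c, rfl⟩ := isHomog_zero_exists_C hG'
  have hc : c ≠ 0 := by
    intro hc0
    apply hhne
    rw [hrep, hc0]
    simp
  have hev := congrArg (eval ![b, -a]) hrep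
  rw [hh] at hev
  rw [map_mul, map_mul, map_pow, map_pow, eval_Lin_self, eval_C, eval_Lin_other] at hev
  rw [zero_pow (by omega), mul_zero] at hev
  rcases mul_eq_zero.mp hev.symm with h' | h'
  · exact hc h'
  · exact hdet ((pow_eq_zero_iff (by omega : k - 1 + 1 ≠ 0)).mp h')

lemma iter_block_inj {a b a' b' : ℂ} (hab : ¬(a = 0 ∧ b = 0)) (hab' : ¬(a' = 0 ∧ b' = 0))
    (hdet : a' * b - b' * a ≠ 0) {gi : ℕ} (hg : 1 ≤ gi) :
    ∀ (r k : ℕ) (x : S2), x.IsHomogeneous k → (Dfun a b)^[gi] x = 0 →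
      gi + r ≤ k + 1 → (Dfun a' b')^[r] x = 0 → x = 0 := by
  intro r
  induction r with
  | zero => intro k x _ _ _ hx; simpa using hx
  | succ r ih =>
    intro k x hx hker har hiter
    have hy : Dfun a' b' x = 0 := by
      apply ih (k - 1) (Dfun a' b' x) (Dfun_isHomog a' b' hx)
      · have h3 : (Dfun a b)^[gi] (Dfun a' b' x) = Dfun a' b' ((Dfun a b)^[gi] x) :=
          ((Dfun_fcomm a b a' b').iterate_left gi) x
        rw [h3, hker]
        simp [Dfun]
      · omega
      · rw [← Function.iterate_succ_apply]
        exact hiter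
    obtain ⟨G, hGhom, rfl⟩ := (ker_structure hab hg (by omega) hx).mp hker
    rw [block_inj hab hab' hdet (by omega) (by omega : (gi - 1) + (k - gi + 1) = k) hGhom hy]
    exact zero_mul _

section Main

variable {m : ℕ} (a b : Fin m → ℂ) (g : Fin m → ℕ)

lemma contractOp_prod_isHomog (u : Finset (Fin m)) :
    ∀ (k : ℕ) (f : S2), f.IsHomogeneous k →
      (contractOp (∏ j ∈ u, Pop (a j) (b j) ^ g j) f).IsHomogeneous (k - ∑ j ∈ u, g j) := by
  induction u using Finset.induction_on with
  | empty => intro k f hf; simpa [contractOp_one] using hf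
  | insert j u hj ih =>
    intro k f hf
    rw [Finset.prod_insert hj, contractOp_mul, Finset.sum_insert hj]
    have h1 := ih k f hf
    rw [contractOp_Pop_pow]
    have h2 := Dfun_iterate_isHomog (a j) (b j) (g j) h1
    rwa [Nat.sub_sub, Nat.add_comm (∑ j ∈ u, g j) (g j)] at h2

lemma contractOp_prod_surj (hab : ∀ i, ¬(a i = 0 ∧ b i = 0)) (u : Finset (Fin m)) :
    ∀ (k : ℕ) (h : S2), h.IsHomogeneous k →
      ∃ f : S2, f.IsHomogeneous (k + ∑ j ∈ u, g j) ∧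
        contractOp (∏ j ∈ u, Pop (a j) (b j) ^ g j) f = h := by
  induction u using Finset.induction_on with
  | empty => intro k h hh; exact ⟨h, by simpa using hh, by rw [Finset.prod_empty, contractOp_one]⟩
  | insert j u hj ih =>
    intro k h hh
    obtain ⟨z, hz, hDz⟩ := Dfun_iter_surj (mkSubst (a j) (b j) (hab j)) (g j) hh
    rw [mkSubst_a, mkSubst_b] at hDz
    obtain ⟨f, hf, hPf⟩ := ih (k + g j) z hz
    refine ⟨f, ?_, ?_⟩
    · rwa [Finset.sum_insert hj, show k + (g j + ∑ j' ∈ u, g j') = k + g j + ∑ j' ∈ u, g j'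
        by omega]
    · rw [Finset.prod_insert hj, contractOp_mul, hPf, contractOp_Pop_pow]
      exact hDz

lemma kill_term (hg : ∀ i, 1 ≤ g i) (u : Finset (Fin m)) (i : Fin m) (hi : i ∈ u)
    {G : S2} {t : ℕ} (hG : G.IsHomogeneous (g i - 1)) :
    contractOp (∏ j ∈ u, Pop (a j) (b j) ^ g j) (G * Lin (a i) (b i) ^ t) = 0 := by
  rw [← Finset.mul_prod_erase u _ hi, mul_comm, contractOp_mul, contractOp_Pop_pow,
    Dfun_iter_kill_block (a i) (b i) (g i) t hG (by have := hg i; omega),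
    contractOp_zero_right]

lemma indep_claim (hab : ∀ i, ¬(a i = 0 ∧ b i = 0))
    (hprop : ∀ i j, i ≠ j → ¬ ∃ c : ℂ, a j = c * a i ∧ b j = c * b i)
    (hg : ∀ i, 1 ≤ g i) (i : Fin m) (u : Finset (Fin m)) :
    (∀ j ∈ u, j ≠ i) → ∀ (k : ℕ) (x : S2), x.IsHomogeneous k →
      contractOp (Pop (a i) (b i) ^ g i) x = 0 →
      g i + ∑ j ∈ u, g j ≤ k →
      contractOp (∏ j ∈ u, Pop (a j) (b j) ^ g j) x = 0 → x = 0 := by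
  induction u using Finset.induction_on with
  | empty => intro _ k x _ _ _ hx; rwa [Finset.prod_empty, contractOp_one] at hx
  | insert j u hj ih =>
    intro hju k x hx hker hbound hzero
    set z := contractOp (∏ j' ∈ u, Pop (a j') (b j') ^ g j') x with hz
    have hji : j ≠ i := hju j (Finset.mem_insert_self j u)
    have hzhom : z.IsHomogeneous (k - ∑ j' ∈ u, g j') := contractOp_prod_isHomog a b g u k x hx
    have hzker : contractOp (Pop (a i) (b i) ^ g i) z = 0 := by
      rw [hz, ← contractOp_mul, mul_comm, contractOp_mul, hker, contractOp_zero_right]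
    rw [Finset.prod_insert hj, contractOp_mul, contractOp_Pop_pow] at hzero
    rw [← hz] at hzero
    have hziter : (Dfun (a j) (b j))^[g j] z = 0 := hzero
    have hdet : a j * b i - b j * a i ≠ 0 := nonprop_det (hab i) (hprop i j (Ne.symm hji))
    have hzker' : (Dfun (a i) (b i))^[g i] z = 0 := by rwa [← contractOp_Pop_pow]
    have hz0 : z = 0 := by
      apply iter_block_inj (hab i) (hab j) hdet (hg i) (g j) (k - ∑ j' ∈ u, g j') z hzhom hzker'
      · rw [Finset.sum_insert hj] at hbound
        have h1 : ∑ j' ∈ u, g j' ≤ k := by omega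
        omega
      · exact hziter
    apply ih (fun j' hj' => hju j' (Finset.mem_insert_of_mem hj')) k x hx hker
    · rw [Finset.sum_insert hj] at hbound; omega
    · rw [← hz, hz0]

end Main

lemma contractOp_sum (φ : S2) {ι : Type*} (u : Finset ι) (F : ι → S2) :
    contractOp φ (∑ i ∈ u, F i) = ∑ i ∈ u, contractOp φ (F i) :=
  map_sum (ctr φ) F u

lemma indep {m : ℕ} (a b : Fin m → ℂ) (g : Fin m → ℕ) {n s : ℕ}
    (hab : ∀ i, ¬(a i = 0 ∧ b i = 0))
    (hprop : ∀ i j, i ≠ j → ¬ ∃ c : ℂ, a j = c * a i ∧ b j = c * b i)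
    (hg : ∀ i, 1 ≤ g i) (hs : ∑ i, g i = s) (hn : s ≤ n)
    (G : Fin m → S2) (hGhom : ∀ i, (G i).IsHomogeneous (g i - 1))
    (hsum : ∑ i, G i * Lin (a i) (b i) ^ (n - g i + 1) = 0) : ∀ i, G i = 0 := by
  intro i
  have hgle : g i ≤ s := by
    rw [← hs]
    exact Finset.single_le_sum (fun _ _ => Nat.zero_le _) (Finset.mem_univ i)
  have hkx : (g i - 1) + (n - g i + 1) = n := by have := hg i; omega
  have hQ : contractOp (∏ j ∈ Finset.univ.erase i, Pop (a j) (b j) ^ g j)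
      (G i * Lin (a i) (b i) ^ (n - g i + 1)) = 0 := by
    have h1 : contractOp (∏ j ∈ Finset.univ.erase i, Pop (a j) (b j) ^ g j)
        (∑ j, G j * Lin (a j) (b j) ^ (n - g j + 1)) = 0 := by
      rw [hsum, contractOp_zero_right]
    rw [show contractOp (∏ j ∈ Finset.univ.erase i, Pop (a j) (b j) ^ g j)
        (∑ j, G j * Lin (a j) (b j) ^ (n - g j + 1))
      = ∑ j, contractOp (∏ j' ∈ Finset.univ.erase i, Pop (a j') (b j') ^ g j')
        (G j * Lin (a j) (b j) ^ (n - g j + 1)) from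
      map_sum (ctr _) _ _] at h1
    rw [Finset.sum_eq_single i] at h1
    · exact h1
    · intro j _ hji
      exact kill_term a b g hg _ j (Finset.mem_erase.mpr ⟨hji, Finset.mem_univ j⟩) (hGhom j)
    · intro hi; exact absurd (Finset.mem_univ i) hi
  have hx0 : G i * Lin (a i) (b i) ^ (n - g i + 1) = 0 := by
    apply indep_claim a b g hab hprop hg i (Finset.univ.erase i)
      (fun j hj => (Finset.mem_erase.mp hj).1) n _ ?_ ?_ ?_ hQ
    · have := (hGhom i).mul ((Lin_isHomog (a i) (b i)).pow (n - g i + 1))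
      rwa [one_mul, hkx] at this
    · rw [contractOp_Pop_pow]
      exact Dfun_iter_kill_block _ _ _ _ (hGhom i) (by have := hg i; omega)
    · rw [Finset.add_sum_erase _ g (Finset.mem_univ i), hs]
      exact hn
  rcases mul_eq_zero.mp hx0 with h' | h'
  · exact h'
  · exact absurd h' (pow_ne_zero _ (Lin_ne_zero (hab i)))

end GAD


open GAD

theorem gad_lemma (n m s : ℕ) (a b : Fin m → ℂ) (g : Fin m → ℕ)
    (hab : ∀ i, ¬ (a i = 0 ∧ b i = 0))
    (hprop : ∀ i j, i ≠ j → ¬ ∃ c : ℂ, a j = c * a i ∧ b j = c * b i)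
    (hg : ∀ i, 1 ≤ g i) (hs : ∑ i, g i = s) (hn : s ≤ n)
    (f : MvPolynomial (Fin 2) ℂ) (hf : f.IsHomogeneous n) :
    contractOp (∏ i, (C (b i) * X 0 - C (a i) * X 1) ^ g i) f = 0 ↔
      ∃ G : Fin m → MvPolynomial (Fin 2) ℂ,
        (∀ i, (G i).IsHomogeneous (g i - 1)) ∧
        f = ∑ i, G i * (C (a i) * X 0 + C (b i) * X 1) ^ (n - g i + 1) := by
  have hP : (∏ i, (C (b i) * X 0 - C (a i) * X 1) ^ g i)
      = ∏ i, Pop (a i) (b i) ^ g i := rfl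
  have hLrfl : ∀ i, (C (a i) * X 0 + C (b i) * X 1 : S2) = Lin (a i) (b i) := fun i => rfl
  have hgle : ∀ i, g i ≤ n := fun i => le_trans (by
    rw [← hs]
    exact Finset.single_le_sum (fun _ _ => Nat.zero_le _) (Finset.mem_univ i)) hn
  have hk : ∀ i, (g i - 1) + (n - g i + 1) = n := fun i => by
    have := hg i; have := hgle i; omega
  rw [hP]
  simp only [hLrfl]
  set P : S2 := ∏ i, Pop (a i) (b i) ^ g i with hPdef
  -- the restricted contraction map
  have hmapsTo : ∀ x ∈ Hgs n, ctr P x ∈ Hgs (n - s) := by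
    intro x hx
    have := contractOp_prod_isHomog a b g Finset.univ n x ((mem_homogeneousSubmodule _ _).mp hx)
    rw [hs] at this
    exact (mem_homogeneousSubmodule _ _).mpr this
  set cP : Hgs n →ₗ[ℂ] Hgs (n - s) := (ctr P).restrict hmapsTo with hcP
  have cP_apply : ∀ x : Hgs n, ((cP x : Hgs (n - s)) : S2) = contractOp P (x : S2) :=
    fun x => rfl
  -- the multiplication map
  set Φ : (∀ i : Fin m, Hgs (g i - 1)) →ₗ[ℂ] Hgs n :=
    ∑ i : Fin m, (mulInto (a i) (b i) (n - g i + 1) (g i - 1) n (hk i)).comp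
      (LinearMap.proj i) with hΦ
  have Φ_apply : ∀ G, ((Φ G : Hgs n) : S2)
      = ∑ i, Lin (a i) (b i) ^ (n - g i + 1) * ((G i : S2)) := by
    intro G
    rw [hΦ]
    rw [LinearMap.sum_apply]
    rw [AddSubmonoidClass.coe_finset_sum]
    exact Finset.sum_congr rfl (fun i _ => by
      rw [LinearMap.comp_apply, LinearMap.proj_apply, mulInto_apply])
  -- range Φ ≤ ker cP
  have hle : LinearMap.range Φ ≤ LinearMap.ker cP := by
    rintro x ⟨G, rfl⟩
    rw [LinearMap.mem_ker]
    apply Subtype.ext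
    rw [cP_apply, Φ_apply]
    rw [contractOp_sum]
    rw [show ((0 : Hgs (n-s)) : S2) = (0 : S2) from rfl]
    apply Finset.sum_eq_zero
    intro i _
    rw [mul_comm]
    exact kill_term a b g hg Finset.univ i (Finset.mem_univ i)
      ((mem_homogeneousSubmodule _ _).mp (G i).2)
  -- Φ injective
  have hinj : Function.Injective Φ := by
    rw [← LinearMap.ker_eq_bot]
    apply LinearMap.ker_eq_bot'.mpr
    intro G hG
    have hval : ∑ i, Lin (a i) (b i) ^ (n - g i + 1) * ((G i : S2)) = 0 := by
      rw [← Φ_apply, hG]; rfl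
    have hval' : ∑ i, ((G i : S2)) * Lin (a i) (b i) ^ (n - g i + 1) = 0 := by
      rw [← hval]; exact Finset.sum_congr rfl (fun i _ => mul_comm _ _)
    have := indep a b g hab hprop hg hs hn (fun i => (G i : S2))
      (fun i => (mem_homogeneousSubmodule _ _).mp (G i).2) hval'
    funext i
    exact Subtype.ext (this i)
  -- surjectivity of cP
  have hsurj : Function.Surjective cP := by
    intro y
    have hy : (y : S2).IsHomogeneous (n - s) := (mem_homogeneousSubmodule _ _).mp y.2
    obtain ⟨x, hxhom, hx⟩ := contractOp_prod_surj a b g hab Finset.univ (n - s) _ hy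
    rw [hs, show n - s + s = n by omega] at hxhom
    exact ⟨⟨x, (mem_homogeneousSubmodule _ _).mpr hxhom⟩, Subtype.ext hx⟩
  -- finrank computations
  have hrk : Module.finrank ℂ (LinearMap.ker cP) = s := by
    have h := LinearMap.finrank_range_add_finrank_ker cP
    rw [LinearMap.range_eq_top.mpr hsurj, finrank_top, finrank_Hgs, finrank_Hgs] at h
    omega
  have hrr : Module.finrank ℂ (LinearMap.range Φ) = s := by
    rw [LinearMap.finrank_range_of_inj hinj, Module.finrank_pi_fintype]
    rw [show ∑ i : Fin m, Module.finrank ℂ (Hgs (g i - 1)) = ∑ i : Fin m, g i from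
      Finset.sum_congr rfl (fun i _ => by rw [finrank_Hgs]; have := hg i; omega)]
    exact hs
  have heq : LinearMap.range Φ = LinearMap.ker cP :=
    Submodule.eq_of_le_of_finrank_le hle (by rw [hrk, hrr])
  constructor
  · intro h0
    have hfK : (⟨f, (mem_homogeneousSubmodule _ _).mpr hf⟩ : Hgs n) ∈ LinearMap.ker cP := by
      rw [LinearMap.mem_ker]
      exact Subtype.ext (by rw [cP_apply]; exact h0)
    rw [← heq] at hfK
    obtain ⟨G, hG⟩ := hfK
    refine ⟨fun i => (G i : S2), fun i => (mem_homogeneousSubmodule _ _).mp (G i).2, ?_⟩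
    have := congrArg (fun z : Hgs n => (z : S2)) hG
    simp only at this
    rw [Φ_apply] at this
    rw [← this]
    exact Finset.sum_congr rfl (fun i _ => mul_comm _ _)
  · rintro ⟨G, hGhom, rfl⟩
    rw [contractOp_sum]
    apply Finset.sum_eq_zero
    intro i _
    exact kill_term a b g hg Finset.univ i (Finset.mem_univ i) (hGhom i)
end

section
/- Let f be a nonzero binary form of degree n, I_f = Ann(f) its apolar ideal, A_f = T/I_f the associated Artinian Gorenstein algebra, and s = max_i dim (A_f)_i. Then the Hilbert function of A_f is H(A_f)(i) = min(i+1, s, n-i+1) for 0 ≤ i ≤ n and 0 otherwise. -/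
open MvPolynomial

namespace HFG
open Finset

abbrev P := MvPolynomial (Fin 2) ℂ

noncomputable def dop (m : Fin 2 →₀ ℕ) (f : P) : P :=
  (fun p => pderiv (0 : Fin 2) p)^[m 0] ((fun p => pderiv (1 : Fin 2) p)^[m 1] f)

lemma contractOp_eq (φ f : P) :
    contractOp φ f = φ.support.sum fun m => φ.coeff m • dop m f := rfl

lemma dop_def (m : Fin 2 →₀ ℕ) (f : P) : dop m f =
    (fun p => pderiv (0 : Fin 2) p)^[m 0] ((fun p => pderiv (1 : Fin 2) p)^[m 1] f) := rfl

lemma iter_pderiv_add (i : Fin 2) (a : ℕ) (f g : P) :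
    (fun p => pderiv i p)^[a] (f + g) =
      (fun p => pderiv i p)^[a] f + (fun p => pderiv i p)^[a] g := by
  induction a generalizing f g with
  | zero => simp
  | succ a ih => simp [Function.iterate_succ_apply, map_add, ih]

lemma iter_pderiv_smul (i : Fin 2) (a : ℕ) (c : ℂ) (f : P) :
    (fun p => pderiv i p)^[a] (c • f) = c • (fun p => pderiv i p)^[a] f := by
  induction a generalizing f with
  | zero => simp
  | succ a ih => simp [Function.iterate_succ_apply, map_smul, ih]

lemma iter_pderiv_zero (i : Fin 2) (a : ℕ) :
    (fun p => pderiv i p)^[a] (0 : P) = 0 :=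
  Function.iterate_fixed (by simp) a

lemma dop_add (m : Fin 2 →₀ ℕ) (f g : P) : dop m (f + g) = dop m f + dop m g := by
  simp [dop, iter_pderiv_add]

lemma dop_smul (m : Fin 2 →₀ ℕ) (c : ℂ) (f : P) : dop m (c • f) = c • dop m f := by
  simp [dop, iter_pderiv_smul]

lemma dop_zero (m : Fin 2 →₀ ℕ) : dop m (0 : P) = 0 := by
  simp [dop, iter_pderiv_zero]

lemma contractOp_zero_right (φ : P) : contractOp φ 0 = 0 := by
  rw [contractOp_eq]
  refine Finset.sum_eq_zero fun m _ => by rw [dop_zero, smul_zero]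

lemma contractOp_eq_superset (φ f : P) {s : Finset (Fin 2 →₀ ℕ)} (hs : φ.support ⊆ s) :
    contractOp φ f = s.sum fun m => φ.coeff m • dop m f := by
  rw [contractOp_eq]
  refine Finset.sum_subset hs fun m _ hm => ?_
  rw [notMem_support_iff.mp hm, zero_smul]

lemma contractOp_add_left (φ ψ f : P) :
    contractOp (φ + ψ) f = contractOp φ f + contractOp ψ f := by
  rw [contractOp_eq_superset (φ + ψ) f (s := φ.support ∪ ψ.support)
      (support_add),
    contractOp_eq_superset φ f (s := φ.support ∪ ψ.support) Finset.subset_union_left,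
    contractOp_eq_superset ψ f (s := φ.support ∪ ψ.support) Finset.subset_union_right,
    ← Finset.sum_add_distrib]
  exact Finset.sum_congr rfl fun m _ => by rw [coeff_add, add_smul]

lemma contractOp_smul_left (c : ℂ) (φ f : P) :
    contractOp (c • φ) f = c • contractOp φ f := by
  rw [contractOp_eq_superset (c • φ) f (s := φ.support) support_smul,
    contractOp_eq, Finset.smul_sum]
  exact Finset.sum_congr rfl fun m _ => by
    rw [coeff_smul, smul_eq_mul, mul_smul]

/-- contraction by `f` as a linear map in `φ`. -/
noncomputable def cL (f : P) : P →ₗ[ℂ] P where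
  toFun φ := contractOp φ f
  map_add' φ ψ := contractOp_add_left φ ψ f
  map_smul' c φ := contractOp_smul_left c φ f

@[simp] lemma cL_apply (f φ : P) : cL f φ = contractOp φ f := rfl

lemma contractOp_monomial (m : Fin 2 →₀ ℕ) (c : ℂ) (f : P) :
    contractOp (monomial m c) f = c • dop m f := by
  rcases eq_or_ne c 0 with rfl | hc
  · simp [contractOp_eq, support_monomial]
  · rw [contractOp_eq, support_monomial, if_neg hc, Finset.sum_singleton,
      coeff_monomial, if_pos rfl]

lemma pderiv_swap (i j : Fin 2) (p : P) :
    pderiv i (pderiv j p) = pderiv j (pderiv i p) := by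
  rcases eq_or_ne i j with rfl | hij
  · rfl
  · induction p using MvPolynomial.induction_on' with
    | monomial s a =>
      have he : s - Finsupp.single j 1 - Finsupp.single i 1
          = s - Finsupp.single i 1 - Finsupp.single j 1 := by
        ext k; simp only [Finsupp.tsub_apply]; omega
      have h1 : ((s - Finsupp.single j 1 : Fin 2 →₀ ℕ)) i = s i := by
        rw [Finsupp.tsub_apply, Finsupp.single_apply, if_neg (Ne.symm hij), Nat.sub_zero]
      have h2 : ((s - Finsupp.single i 1 : Fin 2 →₀ ℕ)) j = s j := by
        rw [Finsupp.tsub_apply, Finsupp.single_apply, if_neg hij, Nat.sub_zero]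
      rw [pderiv_monomial, pderiv_monomial, pderiv_monomial, pderiv_monomial,
        h1, h2, he]
      congr 1
      ring
    | add p q hp hq => simp [map_add, hp, hq]

lemma iter_swap (a b : ℕ) (p : P) :
    (fun q => pderiv (0:Fin 2) q)^[a] ((fun q => pderiv (1:Fin 2) q)^[b] p)
    = (fun q => pderiv (1:Fin 2) q)^[b] ((fun q => pderiv (0:Fin 2) q)^[a] p) :=
  (Function.Commute.iterate_iterate
    (fun q => by exact pderiv_swap 0 1 q) a b) p

lemma contractOp_add_right (φ f g : P) :
    contractOp φ (f + g) = contractOp φ f + contractOp φ g := by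
  rw [contractOp_eq, contractOp_eq, contractOp_eq, ← Finset.sum_add_distrib]
  exact Finset.sum_congr rfl fun m _ => by rw [dop_add, smul_add]

lemma contractOp_smul_right (φ : P) (c : ℂ) (f : P) :
    contractOp φ (c • f) = c • contractOp φ f := by
  rw [contractOp_eq, contractOp_eq, Finset.smul_sum]
  exact Finset.sum_congr rfl fun m _ => by rw [dop_smul, smul_comm]

lemma dop_dop (m m' : Fin 2 →₀ ℕ) (f : P) : dop m (dop m' f) = dop (m + m') f := by
  rw [dop_def, dop_def, dop_def, ← iter_swap, Finsupp.add_apply, Finsupp.add_apply,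
    Function.iterate_add_apply, Function.iterate_add_apply]

lemma contractOp_mul (φ ψ f : P) :
    contractOp (φ * ψ) f = contractOp φ (contractOp ψ f) := by
  induction φ using MvPolynomial.induction_on' with
  | add p q hp hq => rw [add_mul, contractOp_add_left, hp, hq, contractOp_add_left]
  | monomial m c =>
    induction ψ using MvPolynomial.induction_on' with
    | add p q hp hq =>
      rw [mul_add, contractOp_add_left, hp, hq, contractOp_add_left p q f, contractOp_add_right]
    | monomial m' c' =>
      rw [monomial_mul, contractOp_monomial, contractOp_monomial m' c' f, contractOp_monomial, dop_smul,
        dop_dop, smul_smul, mul_comm c c']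

lemma ddeg (d : Fin 2 →₀ ℕ) : d.degree = d 0 + d 1 := by
  rw [Finsupp.degree_apply]
  rw [Finset.sum_subset (Finset.subset_univ d.support)
    (fun x _ hx => Finsupp.notMem_support_iff.mp hx)]
  exact Fin.sum_univ_two d

lemma isHomog_def (φ : P) (k : ℕ) :
    φ.IsHomogeneous k ↔ ∀ d : Fin 2 →₀ ℕ, coeff d φ ≠ 0 → d 0 + d 1 = k := by
  constructor
  · intro h d hd
    have := h hd
    rwa [show Finsupp.weight (1 : Fin 2 → ℕ) = Finsupp.degree from Finsupp.degree_eq_weight_one.symm, ddeg] at this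
  · intro h d hd
    rw [show Finsupp.weight (1 : Fin 2 → ℕ) = Finsupp.degree from Finsupp.degree_eq_weight_one.symm, ddeg]
    exact h d hd

lemma coeff_pderiv (i : Fin 2) (d : Fin 2 →₀ ℕ) (p : P) :
    coeff d (pderiv i p) = ((d i : ℂ) + 1) * coeff (d + Finsupp.single i 1) p := by
  induction p using MvPolynomial.induction_on' with
  | add p q hp hq => rw [map_add, coeff_add, hp, hq, coeff_add, mul_add]
  | monomial s a =>
    rw [pderiv_monomial, coeff_monomial, coeff_monomial]
    rcases eq_or_ne s (d + Finsupp.single i 1) with rfl | hne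
    · rw [if_pos, if_pos rfl]
      · have hsi : ((d + Finsupp.single i 1 : Fin 2 →₀ ℕ)) i = d i + 1 := by
          simp [Finsupp.add_apply]
        rw [hsi]
        push_cast
        ring
      · rw [add_tsub_cancel_right]
    · rcases Nat.eq_zero_or_pos (s i) with hsi | hsi
      · rw [if_neg hne]
        simp [hsi]
      · have h' : ¬(s - Finsupp.single i 1 = d) := by
          intro hEq
          apply hne
          have hle : Finsupp.single i 1 ≤ s := by
            rw [Finsupp.single_le_iff]; omega
          rw [← hEq, tsub_add_cancel_of_le hle]
        rw [if_neg hne, if_neg h']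
        ring

lemma coeff_iter (i : Fin 2) (k : ℕ) (d : Fin 2 →₀ ℕ) (p : P) :
    coeff d ((fun q => pderiv i q)^[k] p)
      = (∏ t ∈ range k, ((d i : ℂ) + t + 1)) * coeff (d + Finsupp.single i k) p := by
  induction k generalizing d with
  | zero => simp
  | succ k ih =>
    rw [Function.iterate_succ_apply', coeff_pderiv, ih]
    have h1 : ((d + Finsupp.single i 1 : Fin 2 →₀ ℕ)) i = d i + 1 := by
      simp [Finsupp.add_apply]
    have h2 : d + Finsupp.single i 1 + Finsupp.single i k = d + Finsupp.single i (k + 1) := by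
      rw [add_assoc, ← Finsupp.single_add, add_comm 1 k]
    rw [h1, h2, ← mul_assoc]
    congr 1
    rw [Finset.prod_range_succ', mul_comm]
    congr 1
    · exact Finset.prod_congr rfl fun t _ => by push_cast; ring
    · push_cast; ring

lemma prod_fact (k : ℕ) : (∏ t ∈ range k, ((t : ℂ) + 1)) = (Nat.factorial k : ℂ) := by
  induction k with
  | zero => simp
  | succ k ih => rw [Finset.prod_range_succ, ih, Nat.factorial_succ]; push_cast; ring

lemma coeff_dop (m d : Fin 2 →₀ ℕ) (p : P) :
    coeff d (dop m p)
      = (∏ t ∈ range (m 0), ((d 0 : ℂ) + t + 1)) *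
        ((∏ t ∈ range (m 1), ((d 1 : ℂ) + t + 1)) *
          coeff (d + Finsupp.single 0 (m 0) + Finsupp.single 1 (m 1)) p) := by
  rw [dop_def, coeff_iter, coeff_iter]
  have h1 : ((d + Finsupp.single (0:Fin 2) (m 0) : Fin 2 →₀ ℕ)) 1 = d 1 := by
    simp [Finsupp.add_apply, Finsupp.single_apply]
  rw [h1]

lemma fin2_eta (m : Fin 2 →₀ ℕ) :
    Finsupp.single (0:Fin 2) (m 0) + Finsupp.single 1 (m 1) = m := by
  ext a
  rw [Finsupp.add_apply, Finsupp.single_apply, Finsupp.single_apply]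
  fin_cases a <;> simp

lemma coeff_zero_dop (m : Fin 2 →₀ ℕ) (p : P) :
    coeff 0 (dop m p) = (Nat.factorial (m 0) : ℂ) * (Nat.factorial (m 1) : ℂ) * coeff m p := by
  rw [coeff_dop]
  simp only [Finsupp.coe_zero, Pi.zero_apply, Nat.cast_zero, zero_add]
  rw [prod_fact, prod_fact, fin2_eta, mul_assoc]

lemma dop_isHomogeneous {p : P} {n : ℕ} (hp : p.IsHomogeneous n) (m : Fin 2 →₀ ℕ) :
    (dop m p).IsHomogeneous (n - (m 0 + m 1)) := by
  rw [isHomog_def]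
  intro d hd
  rw [coeff_dop] at hd
  have hc : coeff (d + Finsupp.single 0 (m 0) + Finsupp.single 1 (m 1)) p ≠ 0 := by
    intro h; rw [h] at hd; simp at hd
  have := (isHomog_def p n).mp hp _ hc
  simp only [Finsupp.add_apply, Finsupp.single_apply] at this
  simp only [Fin.isValue, if_true, if_pos rfl] at this
  have h01 : ((0:Fin 2) = 1) = False := by simp [Fin.ext_iff]
  simp [h01] at this
  omega

lemma dop_eq_zero {p : P} {n : ℕ} (hp : p.IsHomogeneous n) {m : Fin 2 →₀ ℕ}
    (h : n < m 0 + m 1) : dop m p = 0 := by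
  rw [MvPolynomial.eq_zero_iff]
  intro d
  by_contra hd
  rw [coeff_dop] at hd
  have hc : coeff (d + Finsupp.single 0 (m 0) + Finsupp.single 1 (m 1)) p ≠ 0 := by
    intro hh; rw [hh] at hd; simp at hd
  have := (isHomog_def p n).mp hp _ hc
  simp only [Finsupp.add_apply, Finsupp.single_apply] at this
  have h01 : ((0:Fin 2) = 1) = False := by simp [Fin.ext_iff]
  simp [h01] at this
  omega
lemma mem_support_deg {φ : P} {i : ℕ} (hφ : φ.IsHomogeneous i) {m : Fin 2 →₀ ℕ}
    (hm : m ∈ φ.support) : m 0 + m 1 = i :=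
  (isHomog_def φ i).mp hφ m (mem_support_iff.mp hm)

lemma contractOp_isHomogeneous {f : P} {n : ℕ} (hf : f.IsHomogeneous n)
    {φ : P} {i : ℕ} (hφ : φ.IsHomogeneous i) :
    (contractOp φ f).IsHomogeneous (n - i) := by
  rw [contractOp_eq]
  refine MvPolynomial.IsHomogeneous.sum _ _ _ fun m hm => ?_
  have h := dop_isHomogeneous hf m
  rw [mem_support_deg hφ hm] at h
  rw [MvPolynomial.smul_eq_C_mul]
  exact h.C_mul _

lemma contractOp_eq_zero_of_lt {f : P} {n : ℕ} (hf : f.IsHomogeneous n)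
    {φ : P} {i : ℕ} (hφ : φ.IsHomogeneous i) (h : n < i) :
    contractOp φ f = 0 := by
  rw [contractOp_eq]
  refine Finset.sum_eq_zero fun m hm => ?_
  rw [dop_eq_zero hf (by rw [mem_support_deg hφ hm]; exact h), smul_zero]

lemma exists_dual {h : P} {M : ℕ} (hh : h ≠ 0) (hom : h.IsHomogeneous M) :
    ∃ ψ : P, ψ.IsHomogeneous M ∧ coeff 0 (contractOp ψ h) ≠ 0 := by
  obtain ⟨m, hm⟩ := (MvPolynomial.support_nonempty.mpr hh)
  refine ⟨monomial m 1, ?_, ?_⟩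
  · exact isHomogeneous_monomial _ (by rw [ddeg]; exact mem_support_deg hom hm)
  · rw [contractOp_monomial, one_smul, coeff_zero_dop]
    simp only [ne_eq, mul_eq_zero, not_or]
    refine ⟨⟨?_, ?_⟩, mem_support_iff.mp hm⟩
    · exact_mod_cast Nat.factorial_ne_zero _
    · exact_mod_cast Nat.factorial_ne_zero _

noncomputable def homEquiv (i : ℕ) : {d : Fin 2 →₀ ℕ // d.degree = i} ≃ Fin (i+1) where
  toFun d := ⟨d.1 0, by have := d.2; rw [ddeg] at this; omega⟩
  invFun j := ⟨Finsupp.single (0:Fin 2) (j:ℕ) + Finsupp.single 1 (i - (j:ℕ)), by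
    rw [ddeg]
    simp only [Finsupp.add_apply, Finsupp.single_apply]
    have h01 : ((1:Fin 2) = 0) = False := by simp [Fin.ext_iff]
    have h10 : ((0:Fin 2) = 1) = False := by simp [Fin.ext_iff]
    simp [h01, h10]
    omega⟩
  left_inv d := by
    have hd := d.2
    rw [ddeg] at hd
    ext1
    dsimp only
    rw [show i - d.1 0 = d.1 1 by omega, fin2_eta]
  right_inv j := by
    ext1
    dsimp only
    rw [Finsupp.add_apply, Finsupp.single_apply, Finsupp.single_apply]
    have h10 : ((1:Fin 2) = 0) = False := by simp [Fin.ext_iff]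
    simp [h10]

noncomputable def homEquiv' (i : ℕ) : ↥{d : Fin 2 →₀ ℕ | d.degree = i} ≃ Fin (i+1) :=
  homEquiv i

instance homFinite (i : ℕ) : Finite ↥{d : Fin 2 →₀ ℕ | d.degree = i} :=
  Finite.of_equiv _ (homEquiv' i).symm

noncomputable instance homFintype (i : ℕ) : Fintype ↥{d : Fin 2 →₀ ℕ | d.degree = i} :=
  Fintype.ofEquiv _ (homEquiv' i).symm

instance homFD (i : ℕ) : FiniteDimensional ℂ (homogeneousSubmodule (Fin 2) ℂ i) := by
  rw [homogeneousSubmodule_eq_finsupp_supported]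
  exact Module.Finite.of_basis (MvPolynomial.basisRestrictSupport ℂ _)

lemma finrank_hom (i : ℕ) :
    Module.finrank ℂ (homogeneousSubmodule (Fin 2) ℂ i) = i + 1 := by
  rw [homogeneousSubmodule_eq_finsupp_supported]
  rw [show AddMonoidAlgebra.supported ℂ ℂ {d : Fin 2 →₀ ℕ | d.degree = i}
      = MvPolynomial.restrictSupport (σ := Fin 2) ℂ {d | d.degree = i} from rfl]
  rw [Module.finrank_eq_card_basis (MvPolynomial.basisRestrictSupport ℂ {d | d.degree = i})]
  rw [Fintype.card_congr (homEquiv' i), Fintype.card_fin]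
noncomputable def Kf (f : P) (i : ℕ) : Submodule ℂ P :=
  homogeneousSubmodule (Fin 2) ℂ i ⊓ LinearMap.ker (cL f)

instance KfFD (f : P) (i : ℕ) : FiniteDimensional ℂ (Kf f i) :=
  Submodule.finiteDimensional_of_le inf_le_left

noncomputable def kk (f : P) (i : ℕ) : ℕ := Module.finrank ℂ (Kf f i)

lemma kk_le (f : P) (i : ℕ) : kk f i ≤ i + 1 := by
  rw [kk, ← finrank_hom i]
  exact Submodule.finrank_mono inf_le_left

noncomputable def B (f : P) (i j : ℕ) :
    (homogeneousSubmodule (Fin 2) ℂ i) →ₗ[ℂ] (homogeneousSubmodule (Fin 2) ℂ j) →ₗ[ℂ] ℂ :=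
  LinearMap.mk₂ ℂ (fun φ ψ => coeff 0 (contractOp (φ.1 * ψ.1) f))
    (fun φ φ' ψ => by
      try dsimp only
      rw [Submodule.coe_add, add_mul, contractOp_add_left, coeff_add])
    (fun c φ ψ => by
      try dsimp only
      rw [Submodule.coe_smul, smul_mul_assoc, contractOp_smul_left, coeff_smul, smul_eq_mul])
    (fun φ ψ ψ' => by
      try dsimp only
      rw [Submodule.coe_add, mul_add, contractOp_add_left, coeff_add])
    (fun c φ ψ => by
      try dsimp only
      rw [Submodule.coe_smul, mul_smul_comm, contractOp_smul_left, coeff_smul, smul_eq_mul])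

lemma B_apply (f : P) (i j : ℕ) (φ ψ) :
    B f i j φ ψ = coeff 0 (contractOp (φ.1 * ψ.1) f) := rfl

lemma B_flip (f : P) (i j : ℕ) : (B f i j).flip = B f j i := by
  ext ψ φ
  rw [LinearMap.flip_apply, B_apply, B_apply, mul_comm]

lemma B_eq_zero_iff {f : P} {n : ℕ} (hf : f.IsHomogeneous n) (i : ℕ) (hi : i ≤ n)
    (φ : homogeneousSubmodule (Fin 2) ℂ i) :
    B f i (n - i) φ = 0 ↔ contractOp φ.1 f = 0 := by
  constructor
  · intro hB
    by_contra hne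
    have hh : (contractOp φ.1 f).IsHomogeneous (n - i) :=
      contractOp_isHomogeneous hf φ.2
    obtain ⟨ψ, hψh, hψ⟩ := exists_dual hne hh
    have : B f i (n - i) φ ⟨ψ, hψh⟩ = coeff 0 (contractOp ψ (contractOp φ.1 f)) := by
      rw [B_apply, mul_comm, contractOp_mul]
    rw [hB] at this
    simp only [LinearMap.zero_apply] at this
    exact hψ this.symm
  · intro h
    ext ψ
    rw [B_apply, mul_comm, contractOp_mul, h, contractOp_zero_right]
    simp

lemma ker_B (f : P) {n : ℕ} (hf : f.IsHomogeneous n) (i : ℕ) (hi : i ≤ n) :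
    LinearMap.ker (B f i (n - i))
      = Submodule.comap (homogeneousSubmodule (Fin 2) ℂ i).subtype (Kf f i) := by
  ext φ
  rw [LinearMap.mem_ker, Submodule.mem_comap, B_eq_zero_iff hf i hi]
  simp only [Submodule.coe_subtype, Kf, Submodule.mem_inf, LinearMap.mem_ker, cL_apply]
  exact ⟨fun h => ⟨φ.2, h⟩, fun h => h.2⟩

lemma finrank_comap_eq (f : P) (i : ℕ) :
    Module.finrank ℂ
      (Submodule.comap (homogeneousSubmodule (Fin 2) ℂ i).subtype (Kf f i)) = kk f i := by
  rw [kk, ← Submodule.finrank_map_subtype_eq (homogeneousSubmodule (Fin 2) ℂ i)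
    (Submodule.comap (homogeneousSubmodule (Fin 2) ℂ i).subtype (Kf f i)),
    Submodule.map_comap_subtype, inf_of_le_right (show Kf f i ≤ homogeneousSubmodule (Fin 2) ℂ i from inf_le_left)]

lemma rank_eq (f : P) {n : ℕ} (hf : f.IsHomogeneous n) (i : ℕ) (hi : i ≤ n) :
    Module.finrank ℂ (LinearMap.range (B f i (n - i))) + kk f i = i + 1 := by
  have h := LinearMap.finrank_range_add_finrank_ker (B f i (n - i))
  rw [ker_B f hf i hi, finrank_comap_eq, finrank_hom] at h
  exact h

lemma flip_rank (f : P) (i j : ℕ) :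
    Module.finrank ℂ (LinearMap.range (B f i j).flip)
      = Module.finrank ℂ (LinearMap.range (B f i j)) := by
  have h1 : (B f i j).flip
      = (B f i j).dualMap.comp (Module.Dual.eval ℂ (homogeneousSubmodule (Fin 2) ℂ j)) := by
    ext ψ φ; rfl
  rw [h1, LinearMap.range_comp]
  have h2 : LinearMap.range (Module.Dual.eval ℂ (homogeneousSubmodule (Fin 2) ℂ j)) = ⊤ := by
    rw [← Module.evalEquiv_toLinearMap, LinearMap.range_eq_top]
    exact (Module.evalEquiv ℂ _).surjective
  rw [h2, Submodule.map_top, LinearMap.finrank_range_dualMap_eq_finrank_range]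

lemma symmH (f : P) {n : ℕ} (hf : f.IsHomogeneous n) (i : ℕ) (hi : i ≤ n) :
    (i + 1) - kk f i = (n - i + 1) - kk f (n - i) := by
  have h1 := rank_eq f hf i hi
  have h2 := rank_eq f hf (n - i) (Nat.sub_le n i)
  rw [show n - (n - i) = i by omega] at h2
  have h3 : Module.finrank ℂ (LinearMap.range (B f (n - i) i))
      = Module.finrank ℂ (LinearMap.range (B f i (n - i))) := by
    rw [← B_flip, flip_rank]
  omega





lemma Kf_homog {f : P} {i : ℕ} {φ : P} (h : φ ∈ Kf f i) : φ.IsHomogeneous i :=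
  (Submodule.mem_inf.mp h).1

lemma Kf_ann {f : P} {i : ℕ} {φ : P} (h : φ ∈ Kf f i) : contractOp φ f = 0 := by
  have := (Submodule.mem_inf.mp h).2
  rwa [LinearMap.mem_ker, cL_apply] at this

lemma map_mul_le (f : P) (i : ℕ) (s : Fin 2) :
    (Kf f i).map (LinearMap.mulLeft ℂ (X s : P)) ≤ Kf f (i + 1) := by
  rintro x ⟨φ, hφ, rfl⟩
  rw [LinearMap.mulLeft_apply]
  rw [Kf, Submodule.mem_inf]
  constructor
  · rw [mem_homogeneousSubmodule]
    have := (isHomogeneous_X ℂ s).mul (Kf_homog hφ)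
    rwa [add_comm] at this
  · rw [LinearMap.mem_ker, cL_apply, contractOp_mul, Kf_ann hφ, contractOp_zero_right]

lemma not_shift (f : P) (i : ℕ) (hne : Kf f i ≠ ⊥) :
    ¬ ((Kf f i).map (LinearMap.mulLeft ℂ (X (1:Fin 2) : P))
        ≤ (Kf f i).map (LinearMap.mulLeft ℂ (X (0:Fin 2) : P))) := by
  intro hle
  classical
  have hA : ∃ j : ℕ, ∃ φ ∈ Kf f i,
      coeff (Finsupp.single (0:Fin 2) j + Finsupp.single 1 (i - j)) φ ≠ 0 := by
    obtain ⟨φ, hφ, hφ0⟩ := Submodule.ne_bot_iff _ |>.mp hne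
    obtain ⟨m, hm⟩ := MvPolynomial.support_nonempty.mpr hφ0
    have hdeg : m 0 + m 1 = i :=
      (isHomog_def φ i).mp (Kf_homog hφ) m (mem_support_iff.mp hm)
    refine ⟨m 0, φ, hφ, ?_⟩
    rw [show i - m 0 = m 1 by omega, fin2_eta]
    exact mem_support_iff.mp hm
  obtain ⟨φ, hφK, hφc⟩ := Nat.find_spec hA
  set t := Nat.find hA with hT
  have ht_le : t ≤ i := by
    have := (isHomog_def φ i).mp (Kf_homog hφK) _ hφc
    simp only [Finsupp.add_apply, Finsupp.single_apply] at this
    have h10 : ((1:Fin 2) = 0) = False := by simp [Fin.ext_iff]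
    have h01 : ((0:Fin 2) = 1) = False := by simp [Fin.ext_iff]
    simp [h10, h01] at this
    omega
  have hmem : (X (1:Fin 2) : P) * φ ∈ (Kf f i).map (LinearMap.mulLeft ℂ (X (0:Fin 2) : P)) := by
    apply hle
    exact ⟨φ, hφK, by rw [LinearMap.mulLeft_apply]⟩
  obtain ⟨φ', hφ'K, hEq⟩ := hmem
  rw [LinearMap.mulLeft_apply] at hEq
  set e : Fin 2 →₀ ℕ := Finsupp.single (0:Fin 2) t + Finsupp.single 1 (i - t + 1) with hE
  have he1 : e = Finsupp.single (1:Fin 2) 1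
      + (Finsupp.single (0:Fin 2) t + Finsupp.single 1 (i - t)) := by
    ext a
    simp only [hE, Finsupp.add_apply, Finsupp.single_apply]
    fin_cases a <;> simp <;> omega
  have hc1 : coeff e ((X (1:Fin 2) : P) * φ) ≠ 0 := by
    rw [he1, coeff_X_mul]
    exact hφc
  rw [← hEq] at hc1
  rcases Nat.eq_zero_or_pos t with ht0 | htpos
  · rw [coeff_X_mul'] at hc1
    apply hc1
    rw [if_neg]
    simp only [Finsupp.mem_support_iff, hE, Finsupp.add_apply, Finsupp.single_apply, ht0]
    simp
  · have h0e : (0:Fin 2) ∈ e.support := by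
      simp only [Finsupp.mem_support_iff, hE, Finsupp.add_apply, Finsupp.single_apply]
      have h10 : ((1:Fin 2) = 0) = False := by simp [Fin.ext_iff]
      simp [h10]
      omega
    rw [coeff_X_mul', if_pos h0e] at hc1
    have hsub : e - Finsupp.single (0:Fin 2) 1
        = Finsupp.single (0:Fin 2) (t-1) + Finsupp.single 1 (i - (t-1)) := by
      ext a
      simp only [Finsupp.tsub_apply, Finsupp.add_apply, Finsupp.single_apply, hE]
      fin_cases a <;> simp <;> omega
    rw [hsub] at hc1
    have : t ≤ t - 1 := Nat.find_min' hA ⟨φ', hφ'K, hc1⟩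
    omega

lemma step (f : P) (i : ℕ) (hne : Kf f i ≠ ⊥) : kk f i + 1 ≤ kk f (i + 1) := by
  obtain ⟨z, hz1, hz2⟩ := SetLike.not_le_iff_exists.mp (not_shift f i hne)
  set A := (Kf f i).map (LinearMap.mulLeft ℂ (X (0:Fin 2) : P)) with hA
  have hinj : Function.Injective (LinearMap.mulLeft ℂ (X (0:Fin 2) : P)) := by
    intro a b hab
    simp only [LinearMap.mulLeft_apply] at hab
    exact mul_left_cancel₀ (X_ne_zero 0) hab
  have hfr : Module.finrank ℂ A = kk f i :=
    (LinearEquiv.finrank_eq (Submodule.equivMapOfInjective _ hinj (Kf f i))).symm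
  have hsup_le : A ⊔ Submodule.span ℂ {z} ≤ Kf f (i + 1) := by
    refine sup_le (map_mul_le f i 0) ?_
    rw [Submodule.span_le, Set.singleton_subset_iff]
    exact map_mul_le f i 1 hz1
  have : FiniteDimensional ℂ (A ⊔ Submodule.span ℂ {z} : Submodule ℂ P) :=
    Submodule.finiteDimensional_of_le hsup_le
  have hlt : A < A ⊔ Submodule.span ℂ {z} := by
    refine lt_of_le_of_ne le_sup_left fun h => hz2 ?_
    rw [h]
    exact Submodule.mem_sup_right (Submodule.mem_span_singleton_self z)
  have h1 : Module.finrank ℂ A < Module.finrank ℂ (A ⊔ Submodule.span ℂ {z} : Submodule ℂ P) :=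
    Submodule.finrank_lt_finrank_of_lt hlt
  have h2 := Submodule.finrank_mono hsup_le
  rw [hfr] at h1
  show kk f i + 1 ≤ Module.finrank ℂ (Kf f (i+1))
  exact Nat.succ_le_of_lt (lt_of_lt_of_le h1 h2)


lemma dop_zero_index (f : P) : dop 0 f = f := by
  rw [dop_def]
  simp

lemma kk_zero {f : P} (hf0 : f ≠ 0) : kk f 0 = 0 := by
  have hbot : Kf f 0 = ⊥ := by
    rw [eq_bot_iff]
    intro φ hφ
    have hhom := Kf_homog hφ
    have hann := Kf_ann hφ
    rw [Submodule.mem_bot]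
    by_contra hne
    obtain ⟨m, hm⟩ := MvPolynomial.support_nonempty.mpr hne
    have hsub : φ.support ⊆ {0} := by
      intro m' hm'
      have := (isHomog_def φ 0).mp hhom m' (mem_support_iff.mp hm')
      rw [Finset.mem_singleton]
      rw [← fin2_eta m', show m' 0 = 0 by omega, show m' 1 = 0 by omega]
      simp
    have h0m : m = 0 := Finset.mem_singleton.mp (hsub hm)
    have hc0 : coeff 0 φ ≠ 0 := by
      rw [← h0m]; exact mem_support_iff.mp hm
    have : contractOp φ f = coeff 0 φ • f := by
      rw [contractOp_eq_superset φ f hsub, Finset.sum_singleton, dop_zero_index]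
    rw [hann] at this
    exact hf0 (by
      have := (smul_eq_zero.mp this.symm).resolve_left hc0
      exact this)
  rw [kk, hbot]
  exact finrank_bot ℂ _

lemma kk_top {f : P} {n : ℕ} (hf : f.IsHomogeneous n) {i : ℕ} (hi : n < i) :
    kk f i = i + 1 := by
  have htop : Kf f i = homogeneousSubmodule (Fin 2) ℂ i := by
    rw [Kf, inf_eq_left]
    intro φ hφ
    rw [LinearMap.mem_ker, cL_apply]
    exact contractOp_eq_zero_of_lt hf ((mem_homogeneousSubmodule i φ).mp hφ) hi
  rw [kk, htop, finrank_hom]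

lemma kk_step {f : P} {i : ℕ} (h1 : 1 ≤ kk f i) : kk f i + 1 ≤ kk f (i + 1) := by
  refine step f i fun hbot => ?_
  rw [kk, hbot] at h1
  rw [finrank_bot] at h1
  omega

lemma span_eq (f : P) (i : ℕ) :
    Submodule.span ℂ {φ : P | φ.IsHomogeneous i ∧ contractOp φ f = 0} = Kf f i := by
  have hset : {φ : P | φ.IsHomogeneous i ∧ contractOp φ f = 0} = ↑(Kf f i) := by
    ext φ
    simp only [Set.mem_setOf_eq, SetLike.mem_coe, Kf, Submodule.mem_inf,
      mem_homogeneousSubmodule, LinearMap.mem_ker, cL_apply]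
  rw [hset, Submodule.span_eq]

end HFG

namespace HFG8

lemma combinatorics (n : ℕ) (k : ℕ → ℕ)
    (h0 : k 0 = 0)
    (htop : ∀ i, n < i → k i = i + 1)
    (hstep : ∀ i, 1 ≤ k i → k i + 1 ≤ k (i + 1))
    (hsym : ∀ i ≤ n, (i + 1) - k i = (n - i + 1) - k (n - i)) :
    ∃ d, IsGreatest (Set.range fun i => i + 1 - k i) d ∧
      ∀ i, i + 1 - k i = min (i + 1) (min d (n + 1 - i)) := by
  classical
  have hex : ∃ j, 1 ≤ k j := ⟨n + 1, by rw [htop (n + 1) (by omega)]; omega⟩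
  set d := Nat.find hex with hD
  have hd1 : 1 ≤ k d := Nat.find_spec hex
  have hd0 : 1 ≤ d := by
    rcases Nat.eq_zero_or_pos d with h | h
    · rw [h, h0] at hd1; omega
    · exact h
  have hdle : d ≤ n + 1 := Nat.find_le (by rw [htop (n + 1) (by omega)]; omega)
  have hklt : ∀ i < d, k i = 0 := by
    intro i hi
    have := Nat.find_min hex hi
    omega
  have mono : ∀ a b, 1 ≤ k a → a ≤ b → k a + (b - a) ≤ k b := by
    intro a b h1 hab
    induction b, hab using Nat.le_induction with
    | base => omega
    | succ b hb ih =>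
      have h2 := ih
      have h3 : 1 ≤ k b := by omega
      have := hstep b h3
      omega
  have Hdec : ∀ a b, d ≤ a → a ≤ b → b + 1 - k b ≤ a + 1 - k a := by
    intro a b hda hab
    have h1 : 1 ≤ k a := by have := mono d a hd1 hda; omega
    have := mono a b h1 hab
    omega
  have claimA : ∀ i, 2 * i + 1 ≤ n → i + 1 - k i ≤ (i + 1) + 1 - k (i + 1) := by
    intro i hi
    by_cases hk : 1 ≤ k (i + 1)
    · have hdi : d ≤ i + 1 := Nat.find_le hk
      have h1 := Hdec (i + 1) (n - i) hdi (by omega)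
      have h2 := hsym i (by omega)
      omega
    · omega
  have HgeD : ∀ j, d - 1 ≤ j → 2 * j ≤ n + 1 → d ≤ j + 1 - k j := by
    intro j hj
    induction j, hj using Nat.le_induction with
    | base =>
      intro _
      have := hklt (d - 1) (by omega)
      omega
    | succ j hj ih =>
      intro h2j
      have hA := claimA j (by omega)
      have := ih (by omega)
      omega
  have HleD : ∀ j, d ≤ j → j + 1 - k j ≤ d := by
    intro j hj
    have := Hdec d j le_rfl hj
    omega
  have hub : ∀ i, i + 1 - k i ≤ d := by
    intro i
    by_cases hin : n < i
    · have := htop i hin; omega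
    · push_neg at hin
      by_cases h2i : 2 * i ≤ n
      · by_cases hid : i < d
        · have := hklt i hid; omega
        · exact HleD i (by omega)
      · have hs := hsym i hin
        by_cases hjd : n - i < d
        · have := hklt (n - i) hjd; omega
        · have := HleD (n - i) (by omega); omega
  have hmem : (d - 1) + 1 - k (d - 1) = d := by
    have := hklt (d - 1) (by omega)
    omega
  refine ⟨d, ⟨⟨d - 1, hmem⟩, ?_⟩, ?_⟩
  · rintro x ⟨i, rfl⟩
    exact hub i
  · intro i
    by_cases hin : n < i
    · have := htop i hin
      omega
    · push_neg at hin
      by_cases h2i : 2 * i ≤ n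
      · by_cases hid : i < d
        · have h1 := hklt i hid
          omega
        · have h1 := HgeD i (by omega) (by omega)
          have h2 := HleD i (by omega)
          omega
      · have hs := hsym i hin
        by_cases hjd : n - i < d
        · have := hklt (n - i) hjd
          omega
        · have h1 := HgeD (n - i) (by omega) (by omega)
          have h2 := HleD (n - i) (by omega)
          omega

end HFG8

theorem hilbert_function_gorenstein (n s : ℕ)
    (f : MvPolynomial (Fin 2) ℂ) (hf0 : f ≠ 0) (hf : f.IsHomogeneous n)
    (hs : IsGreatest (Set.range fun i =>
      i + 1 - Module.finrank ℂ
        ↥(Submodule.span ℂ {φ : MvPolynomial (Fin 2) ℂ |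
          φ.IsHomogeneous i ∧ contractOp φ f = 0})) s) :
    ∀ i : ℕ,
      i + 1 - Module.finrank ℂ
        ↥(Submodule.span ℂ {φ : MvPolynomial (Fin 2) ℂ |
          φ.IsHomogeneous i ∧ contractOp φ f = 0})
        = min (i + 1) (min s (n + 1 - i)) := by
  have hfun : (fun i => i + 1 - Module.finrank ℂ
        ↥(Submodule.span ℂ {φ : MvPolynomial (Fin 2) ℂ |
          φ.IsHomogeneous i ∧ contractOp φ f = 0}))
      = fun i => i + 1 - HFG.kk f i := by
    funext i
    rw [HFG.span_eq f i]
    rfl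
  rw [hfun] at hs
  obtain ⟨d, hgr, hform⟩ := HFG8.combinatorics n (HFG.kk f)
    (HFG.kk_zero hf0)
    (fun i hi => HFG.kk_top hf hi)
    (fun i hi => HFG.kk_step hi)
    (fun i hi => HFG.symmH f hf i hi)
  have hsd : s = d := hs.unique hgr
  intro i
  rw [show Submodule.span ℂ {φ : MvPolynomial (Fin 2) ℂ |
      φ.IsHomogeneous i ∧ contractOp φ f = 0} = HFG.Kf f i from HFG.span_eq f i]
  rw [hsd]
  exact hform i
end
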